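/- arXiv:2007.10924 — 10 statements merged into one kernel-verified Lean document; each statement's English description precedes it below -/
import Mathlib

section
/- Let n ≥ 1 and let f : D → {0,1} be a non-constant n-bit partial Boolean function. Then f can be computed exactly by a quantum 1-query algorithm if and only if there exists a vector β = (β_0, β_1, …, β_n) ∈ ℝ^{n+1} with β_i ≥ 0 for all i, β_0 + β_1 + ⋯ + β_n = 1, and β_0 + Σ_{i=1}^{n} β_i·(−1)^{x_i ⊕ y_i} = 0 for every x ∈ D with f(x) = 0 and every y ∈ D with f(y) = 1. -/
open scoped BigOperators

noncomputable section

/-- The quantum oracle `O_x`, as a diagonal matrix acting on `ℂ^{(n+1)m}`, whose basis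
vectors are indexed by pairs `(i, j)` with `i ∈ {0, 1, …, n}` (encoded as `Option (Fin n)`,
`none` playing the role of `0`) and `j ∈ {1, …, m}`. -/
def oracleMat (n m : ℕ) (x : Fin n → Bool) :
    Matrix (Option (Fin n) × Fin m) (Option (Fin n) × Fin m) ℂ :=
  Matrix.diagonal fun p =>
    match p.1 with
    | none => 1
    | some i => if x i then -1 else 1

/-- Squared Euclidean norm of a complex vector. -/
def vecNormSq {ι : Type*} [Fintype ι] (v : ι → ℂ) : ℝ :=
  ∑ i, Complex.normSq (v i)

/-- The partial Boolean function `f` with domain (promised set) `D` is computed exactly by a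
quantum 1-query algorithm: there are `m ≥ 1`, a unit vector `ψ`, unitaries `U₀, U₁` and an
orthogonal projection `P` with `‖P U₁ O_x U₀ ψ‖² = f x` for all `x ∈ D`. -/
def ComputedExactly1 {n : ℕ} (D : Set (Fin n → Bool)) (f : (Fin n → Bool) → Bool) : Prop :=
  ∃ m : ℕ, 1 ≤ m ∧
    ∃ ψ : Option (Fin n) × Fin m → ℂ, vecNormSq ψ = 1 ∧
      ∃ U₀ U₁ P : Matrix (Option (Fin n) × Fin m) (Option (Fin n) × Fin m) ℂ,
        U₀ ∈ Matrix.unitaryGroup (Option (Fin n) × Fin m) ℂ ∧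
        U₁ ∈ Matrix.unitaryGroup (Option (Fin n) × Fin m) ℂ ∧
        P.IsHermitian ∧ P * P = P ∧
        ∀ x ∈ D, vecNormSq ((P * U₁ * oracleMat n m x * U₀).mulVec ψ) = if f x then 1 else 0

/-- A multilinear polynomial: degree at most 1 in each variable. -/
def IsMultilinear {n : ℕ} (p : MvPolynomial (Fin n) ℝ) : Prop :=
  ∀ i, p.degreeOf i ≤ 1

/-- `p` represents the partial Boolean function `f` on the promised set `D`. -/
def Represents {n : ℕ} (p : MvPolynomial (Fin n) ℝ)
    (D : Set (Fin n → Bool)) (f : (Fin n → Bool) → Bool) : Prop :=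
  ∀ x ∈ D, MvPolynomial.eval (fun i => if x i then (1 : ℝ) else 0) p = if f x then 1 else 0

/-- `f` (with domain `D`) depends on `k` bits: `k` is the minimum, over all multilinear
polynomials representing `f`, of the number of variables occurring. -/
def DependsOnBits {n : ℕ} (D : Set (Fin n → Bool)) (f : (Fin n → Bool) → Bool) (k : ℕ) : Prop :=
  IsLeast {c | ∃ p : MvPolynomial (Fin n) ℝ,
    IsMultilinear p ∧ Represents p D f ∧ p.vars.card = c} k

/-- The Fourier basis vector `|F(x)⟩₁ = (1, (−1)^{x_1}, …, (−1)^{x_n})`. -/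
def fourierVec {n : ℕ} (x : Fin n → Bool) : Option (Fin n) → ℂ :=
  fun o => match o with
  | none => 1
  | some i => if x i then -1 else 1

/-- The polynomial basis vector `(1, x₁, …, xₙ)`. -/
def polyVec {n : ℕ} (x : Fin n → Bool) : Option (Fin n) → ℝ :=
  fun o => match o with
  | none => 1
  | some i => if x i then 1 else 0

/-- A degree-1 SOS complex representation matrix of `f` and its negation, given by the
rows `α l` (`l < p` for `f`, `p ≤ l < p + q` for the negation of `f`). -/
def SOSRep {n : ℕ} (D : Set (Fin n → Bool)) (f : (Fin n → Bool) → Bool)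
    (p q : ℕ) (α : Fin (p + q) → Option (Fin n) → ℂ) : Prop :=
  (∀ x ∈ D, ∑ l : Fin p,
      Complex.normSq (∑ i, (starRingEnd ℂ) (α (Fin.castAdd q l) i) * fourierVec x i)
      = if f x then 1 else 0) ∧
  (∀ x ∈ D, ∑ l : Fin q,
      Complex.normSq (∑ i, (starRingEnd ℂ) (α (Fin.natAdd p l) i) * fourierVec x i)
      = if f x then 0 else 1) ∧
  (∀ x : Fin n → Bool, ∑ l : Fin (p + q),
      Complex.normSq (∑ i, (starRingEnd ℂ) (α l i) * fourierVec x i) = 1)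

/-- `rank(G_f(1,b))`: the dimension of the real span of the vectors `(1, x₁, …, xₙ)`
over all `x ∈ D` with `f x = b`. -/
def rankG {n : ℕ} (D : Set (Fin n → Bool)) (f : (Fin n → Bool) → Bool) (b : Bool) : ℕ :=
  Module.finrank ℝ (Submodule.span ℝ (polyVec '' {x ∈ D | f x = b}))

end


namespace Stmt0Aux
open Matrix
set_option linter.unusedSectionVars false

noncomputable def cinner {ι : Type*} [Fintype ι] (u v : ι → ℂ) : ℂ := star u ⬝ᵥ v

variable {ι : Type*} [Fintype ι] [DecidableEq ι]

lemma cinner_self (v : ι → ℂ) : cinner v v = (vecNormSq v : ℂ) := by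
  simp [cinner, dotProduct, vecNormSq, Pi.star_apply, Complex.normSq_eq_conj_mul_self]

lemma vecNormSq_eq_zero_iff {v : ι → ℂ} : vecNormSq v = 0 ↔ v = 0 := by
  constructor
  · intro h
    funext i
    have h0 : ∀ i ∈ Finset.univ, (0:ℝ) ≤ Complex.normSq (v i) := fun i _ => Complex.normSq_nonneg _
    have := (Finset.sum_eq_zero_iff_of_nonneg h0).mp h i (Finset.mem_univ i)
    simpa using Complex.normSq_eq_zero.mp this
  · intro h; subst h; simp [vecNormSq]

lemma cinner_unitary {U : Matrix ι ι ℂ} (hU : U ∈ Matrix.unitaryGroup ι ℂ) (a b : ι → ℂ) :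
    cinner (U *ᵥ a) (U *ᵥ b) = cinner a b := by
  have h1 : star U * U = 1 := Matrix.mem_unitaryGroup_iff'.mp hU
  rw [Matrix.star_eq_conjTranspose] at h1
  simp only [cinner, star_mulVec, dotProduct_mulVec, vecMul_vecMul, h1, vecMul_one]

lemma vecNormSq_unitary {U : Matrix ι ι ℂ} (hU : U ∈ Matrix.unitaryGroup ι ℂ) (a : ι → ℂ) :
    vecNormSq (U *ᵥ a) = vecNormSq a := by
  have := cinner_unitary hU a a
  rw [cinner_self, cinner_self] at this
  exact_mod_cast this

lemma cinner_hermitian_left {P : Matrix ι ι ℂ} (hP : P.IsHermitian) (a b : ι → ℂ) :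
    cinner (P *ᵥ a) b = cinner a (P *ᵥ b) := by
  simp only [cinner, star_mulVec, dotProduct_mulVec, hP.eq]

lemma cinner_sub_left (u v w : ι → ℂ) : cinner (u - v) w = cinner u w - cinner v w := by
  simp [cinner, sub_dotProduct]

lemma cinner_sub_right (u v w : ι → ℂ) : cinner u (v - w) = cinner u v - cinner u w := by
  simp [cinner, dotProduct_sub]

lemma proj_fix {P : Matrix ι ι ℂ} (hP : P.IsHermitian) (hP2 : P * P = P) {b : ι → ℂ}
    (hb : vecNormSq (P *ᵥ b) = vecNormSq b) : P *ᵥ b = b := by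
  set c := P *ᵥ b with hc
  have hcc : cinner c c = cinner b c := by
    rw [hc, cinner_hermitian_left hP, mulVec_mulVec, hP2]
  have hcb : cinner c b = cinner b c := cinner_hermitian_left hP b b
  have hbc : cinner b c = (vecNormSq b : ℂ) := by rw [← hcc, cinner_self, hb]
  have hzero : cinner (b - c) (b - c) = 0 := by
    rw [cinner_sub_left, cinner_sub_right, cinner_sub_right, hcb, hcc, hbc, cinner_self]
    ring
  rw [cinner_self] at hzero
  have h0 : vecNormSq (b - c) = 0 := by exact_mod_cast hzero
  have := vecNormSq_eq_zero_iff.mp h0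
  rw [sub_eq_zero] at this
  exact this.symm

noncomputable def osign {n : ℕ} (x : Fin n → Bool) : Option (Fin n) → ℝ
  | none => 1
  | some i => if x i then -1 else 1

lemma oracle_mulVec_apply {n m : ℕ} (x : Fin n → Bool) (φ : Option (Fin n) × Fin m → ℂ)
    (p : Option (Fin n) × Fin m) :
    (oracleMat n m x *ᵥ φ) p = (osign x p.1 : ℂ) * φ p := by
  rw [oracleMat, mulVec_diagonal]
  rcases p with ⟨i, j⟩
  cases i <;> simp [osign] <;> split_ifs <;> simp

lemma osign_mul {n : ℕ} (x y : Fin n → Bool) (i : Fin n) :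
    osign x (some i) * osign y (some i) = if x i = y i then 1 else -1 := by
  simp only [osign]
  cases hx : x i <;> cases hy : y i <;> norm_num

lemma cinner_oracle {n m : ℕ} (x y : Fin n → Bool) (φ : Option (Fin n) × Fin m → ℂ) :
    cinner (oracleMat n m x *ᵥ φ) (oracleMat n m y *ᵥ φ)
      = ((∑ p : Option (Fin n) × Fin m,
          osign x p.1 * osign y p.1 * Complex.normSq (φ p) : ℝ) : ℂ) := by
  unfold cinner dotProduct
  push_cast
  refine Finset.sum_congr rfl fun p _ => ?_
  rw [Pi.star_apply, oracle_mulVec_apply, oracle_mulVec_apply, star_mul']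
  have h1 : star ((osign x p.1 : ℝ) : ℂ) = ((osign x p.1 : ℝ) : ℂ) := by
    simp [Complex.star_def, Complex.conj_ofReal]
  have h2 : ((Complex.normSq (φ p) : ℝ) : ℂ) = star (φ p) * φ p := by
    simp [Complex.star_def, Complex.normSq_eq_conj_mul_self]
  rw [h1, h2]
  ring

lemma sum_osign {n m : ℕ} (x y : Fin n → Bool) (g : Option (Fin n) × Fin m → ℝ) :
    ∑ p : Option (Fin n) × Fin m, osign x p.1 * osign y p.1 * g p
      = (∑ j, g (none, j)) +
        ∑ i : Fin n, (∑ j, g (some i, j)) * (if x i = y i then 1 else -1) := by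
  rw [Fintype.sum_prod_type, Fintype.sum_option]
  congr 1
  · simp [osign]
  · refine Finset.sum_congr rfl fun i _ => ?_
    rw [Finset.sum_mul]
    refine Finset.sum_congr rfl fun j _ => ?_
    rw [← osign_mul x y i]
    ring

lemma vecNormSq_option {n m : ℕ} (φ : Option (Fin n) × Fin m → ℂ) :
    vecNormSq φ = (∑ j, Complex.normSq (φ (none, j))) +
        ∑ i : Fin n, ∑ j, Complex.normSq (φ (some i, j)) := by
  rw [vecNormSq, Fintype.sum_prod_type, Fintype.sum_option]

lemma vecNormSq_oracle {n m : ℕ} (x : Fin n → Bool) (φ : Option (Fin n) × Fin m → ℂ) :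
    vecNormSq (oracleMat n m x *ᵥ φ) = vecNormSq φ := by
  rw [vecNormSq, vecNormSq]
  refine Finset.sum_congr rfl fun p _ => ?_
  rw [oracle_mulVec_apply, Complex.normSq_mul]
  have : Complex.normSq ((osign x p.1 : ℝ) : ℂ) = 1 := by
    rcases p with ⟨i, j⟩
    cases i <;> simp [osign] <;> split_ifs <;> simp
  rw [this, one_mul]

lemma cinner_zero_left (b : ι → ℂ) : cinner 0 b = 0 := by
  simp [cinner]


lemma converse {n : ℕ} (D : Set (Fin n → Bool)) (f : (Fin n → Bool) → Bool)
    (β : Option (Fin n) → ℝ) (hβ : ∀ i, 0 ≤ β i) (hsum : ∑ i, β i = 1)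
    (horth : ∀ x ∈ D, f x = false → ∀ y ∈ D, f y = true →
      β none + ∑ i : Fin n, β (some i) * (if x i = y i then 1 else -1) = 0) :
    ComputedExactly1 D f := by
  classical
  set φ : Option (Fin n) × Fin 1 → ℂ := fun p => ((Real.sqrt (β p.1) : ℝ) : ℂ) with hφdef
  have hnsq : ∀ p : Option (Fin n) × Fin 1, Complex.normSq (φ p) = β p.1 := by
    intro p
    simp [hφdef, Complex.normSq_ofReal, Real.mul_self_sqrt (hβ p.1), Real.sq_sqrt (hβ p.1)]
  have hφn : vecNormSq φ = 1 := by
    rw [vecNormSq]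
    calc ∑ p : Option (Fin n) × Fin 1, Complex.normSq (φ p)
        = ∑ p : Option (Fin n) × Fin 1, β p.1 := Finset.sum_congr rfl fun p _ => hnsq p
      _ = ∑ i : Option (Fin n), β i := by rw [Fintype.sum_prod_type]; simp
      _ = 1 := hsum
  set eqv := WithLp.equiv 2 (Option (Fin n) × Fin 1 → ℂ) with heqv
  set S : Submodule ℂ (EuclideanSpace ℂ (Option (Fin n) × Fin 1)) :=
    Submodule.span ℂ ((fun y => eqv.symm ((oracleMat n 1 y).mulVec φ)) ''
      {y | y ∈ D ∧ f y = true}) with hS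
  set T : EuclideanSpace ℂ (Option (Fin n) × Fin 1) →ₗ[ℂ]
      EuclideanSpace ℂ (Option (Fin n) × Fin 1) :=
    S.subtype ∘ₗ (S.orthogonalProjectionOnto).toLinearMap with hT
  have hTapp : ∀ v, T v = ((S.orthogonalProjectionOnto v : S) : EuclideanSpace ℂ _) := fun _ => rfl
  set P := Matrix.toEuclideanLin.symm T with hP
  have hTP : Matrix.toEuclideanLin P = T := Matrix.toEuclideanLin.apply_symm_apply T
  have hPapp : ∀ v : Option (Fin n) × Fin 1 → ℂ,
      P.mulVec v = eqv (T (eqv.symm v)) := by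
    intro v
    have h : T (eqv.symm v) = eqv.symm (P.mulVec v) := by
      rw [← hTP]; exact Matrix.toEuclideanLin_apply_piLp_toLp P v
    rw [h, Equiv.apply_symm_apply]
  have hinner : ∀ u v : Option (Fin n) × Fin 1 → ℂ,
      (inner ℂ (eqv.symm u) (eqv.symm v) : ℂ) = cinner u v := by
    intro u v
    rw [PiLp.inner_apply]
    simp only [RCLike.inner_apply, heqv, WithLp.equiv_symm_apply, PiLp.toLp_apply]
    simp [cinner, dotProduct, mul_comm]
  have hadj : T = LinearMap.adjoint T := by
    rw [LinearMap.eq_adjoint_iff]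
    intro x y
    exact Submodule.inner_starProjection_left_eq_right S x y
  have hPH : P.IsHermitian := by
    have h : Matrix.toEuclideanLin Pᴴ = Matrix.toEuclideanLin P := by
      rw [Matrix.toEuclideanLin_conjTranspose_eq_adjoint, hTP, ← hadj]
    exact Matrix.toEuclideanLin.injective h
  have hTT : ∀ v, T (T v) = T v := by
    intro v
    rw [hTapp (T v), hTapp v, Submodule.orthogonalProjectionOnto_mem_subspace_eq_self]
  have hP2 : P * P = P := by
    refine Matrix.toLin'.injective (LinearMap.ext fun v => ?_)
    rw [Matrix.toLin'_apply, Matrix.toLin'_apply]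
    rw [← Matrix.mulVec_mulVec]
    rw [hPapp v, hPapp, Equiv.symm_apply_apply, hTT]
  have hfix : ∀ y ∈ D, f y = true →
      P.mulVec ((oracleMat n 1 y).mulVec φ) = (oracleMat n 1 y).mulVec φ := by
    intro y hy hfy
    rw [hPapp]
    have hmem : eqv.symm ((oracleMat n 1 y).mulVec φ) ∈ S :=
      Submodule.subset_span ⟨y, ⟨hy, hfy⟩, rfl⟩
    have h1 : T (eqv.symm ((oracleMat n 1 y).mulVec φ)) =
        eqv.symm ((oracleMat n 1 y).mulVec φ) := by
      rw [hTapp]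
      exact Submodule.starProjection_eq_self_iff.mpr hmem
    rw [h1, Equiv.apply_symm_apply]
  have hkill : ∀ x ∈ D, f x = false →
      P.mulVec ((oracleMat n 1 x).mulVec φ) = 0 := by
    intro x hx hfx
    have hmem : eqv.symm ((oracleMat n 1 x).mulVec φ) ∈ Sᗮ := by
      rw [Submodule.mem_orthogonal]
      intro u hu
      refine Submodule.span_induction (p := fun u _ =>
        (inner ℂ u (eqv.symm ((oracleMat n 1 x).mulVec φ)) : ℂ) = 0) ?_ ?_ ?_ ?_ hu
      · rintro _ ⟨y, ⟨hy, hfy⟩, rfl⟩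
        rw [hinner, cinner_oracle]
        have hr : ∑ p : Option (Fin n) × Fin 1,
            osign y p.1 * osign x p.1 * Complex.normSq (φ p) = 0 := by
          rw [sum_osign]
          calc (∑ j : Fin 1, Complex.normSq (φ (none, j))) +
              ∑ i : Fin n, (∑ j : Fin 1, Complex.normSq (φ (some i, j))) *
                (if y i = x i then 1 else -1)
              = β none + ∑ i : Fin n, β (some i) * (if x i = y i then 1 else -1) := by
                congr 1
                · simp [hnsq]
                · refine Finset.sum_congr rfl fun i _ => ?_
                  have hyx : (if y i = x i then (1:ℝ) else -1) =
                      (if x i = y i then 1 else -1) := by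
                    by_cases h : x i = y i
                    · simp [h]
                    · have h' : ¬ (y i = x i) := fun hh => h hh.symm
                      simp [h, h']
                  rw [hyx]
                  simp [hnsq]
            _ = 0 := horth x hx hfx y hy hfy
        rw [hr]
        exact Complex.ofReal_zero
      · exact inner_zero_left _
      · intro a b _ _ ha hb; rw [inner_add_left, ha, hb, add_zero]
      · intro c a _ ha; rw [inner_smul_left, ha, mul_zero]
    rw [hPapp]
    have h0 : T (eqv.symm ((oracleMat n 1 x).mulVec φ)) = 0 := by
      rw [hTapp, Submodule.orthogonalProjectionOnto_apply_of_mem_orthogonal hmem]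
      rfl
    rw [h0]
    rfl
  refine ⟨1, le_refl 1, φ, hφn, 1, 1, P, one_mem _, one_mem _, hPH, hP2, fun x hx => ?_⟩
  rw [mul_one, mul_one]
  rw [← Matrix.mulVec_mulVec]
  cases hfx : f x with
  | false => rw [hkill x hx hfx]; simp [vecNormSq]
  | true => rw [hfix x hx hfx, vecNormSq_oracle, hφn]; simp

end Stmt0Aux

theorem stmt_0 (n : ℕ) (hn : 1 ≤ n) (D : Set (Fin n → Bool)) (f : (Fin n → Bool) → Bool)
    (hnc : (∃ x ∈ D, f x = false) ∧ (∃ y ∈ D, f y = true)) :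
    ComputedExactly1 D f ↔
      ∃ β : Option (Fin n) → ℝ, (∀ i, 0 ≤ β i) ∧ (∑ i, β i) = 1 ∧
        ∀ x ∈ D, f x = false → ∀ y ∈ D, f y = true →
          β none + ∑ i : Fin n, β (some i) * (if x i = y i then 1 else -1) = 0 := by
  constructor
  · rintro ⟨m, hm, ψ, hψ, U₀, U₁, P, hU₀, hU₁, hPH, hP2, hval⟩
    set φ := U₀.mulVec ψ with hφ
    have hφn : vecNormSq φ = 1 := by rw [hφ, Stmt0Aux.vecNormSq_unitary hU₀, hψ]
    refine ⟨fun i => ∑ j, Complex.normSq (φ (i, j)),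
      fun i => Finset.sum_nonneg (fun j _ => Complex.normSq_nonneg _), ?_, ?_⟩
    · rw [Fintype.sum_option, ← Stmt0Aux.vecNormSq_option φ]
      exact hφn
    · intro x hx hfx y hy hfy
      set a := U₁.mulVec ((oracleMat n m x).mulVec φ) with ha
      set b := U₁.mulVec ((oracleMat n m y).mulVec φ) with hb
      have hmv : ∀ z : Fin n → Bool,
          (P * U₁ * oracleMat n m z * U₀).mulVec ψ = P.mulVec (U₁.mulVec ((oracleMat n m z).mulVec φ)) := by
        intro z
        rw [hφ]
        simp only [Matrix.mulVec_mulVec, Matrix.mul_assoc]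
      have hva : vecNormSq (P.mulVec a) = 0 := by
        have h := hval x hx
        rw [hfx] at h
        simpa [ha, hmv x] using h
      have ha0 : P.mulVec a = 0 := Stmt0Aux.vecNormSq_eq_zero_iff.mp hva
      have hvb : vecNormSq (P.mulVec b) = 1 := by
        have h := hval y hy
        rw [hfy] at h
        simpa [hb, hmv y] using h
      have hbn : vecNormSq b = 1 := by
        rw [hb, Stmt0Aux.vecNormSq_unitary hU₁, Stmt0Aux.vecNormSq_oracle, hφn]
      have hPb : P.mulVec b = b := Stmt0Aux.proj_fix hPH hP2 (hvb.trans hbn.symm)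
      have horth : Stmt0Aux.cinner a b = 0 := by
        rw [← hPb, ← Stmt0Aux.cinner_hermitian_left hPH, ha0, Stmt0Aux.cinner_zero_left]
      rw [ha, hb, Stmt0Aux.cinner_unitary hU₁, Stmt0Aux.cinner_oracle] at horth
      have hreal : ∑ p : Option (Fin n) × Fin m,
          Stmt0Aux.osign x p.1 * Stmt0Aux.osign y p.1 * Complex.normSq (φ p) = 0 := by
        exact_mod_cast horth
      rw [Stmt0Aux.sum_osign] at hreal
      exact hreal
  · rintro ⟨β, hβ, hsum, horth⟩
    exact Stmt0Aux.converse D f β hβ hsum horth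
end

section
/- Let n ≥ 1 and let f : D → {0,1} be an n-bit partial Boolean function such that for every k ∈ {1,…,n} there exist X, X' ∈ D that differ exactly in the k-th coordinate and satisfy f(X) ≠ f(X'). If there exists a vector β = (β_0, β_1, …, β_n) ∈ ℝ^{n+1} with β_i ≥ 0 for all i, β_0 + β_1 + ⋯ + β_n = 1, and β_0 + Σ_{i=1}^{n} β_i·(−1)^{x_i ⊕ y_i} = 0 for every x ∈ D with f(x) = 0 and every y ∈ D with f(y) = 1, then n ≤ 2. -/
open scoped BigOperators

theorem stmt_3 (n : ℕ) (hn : 1 ≤ n) (D : Set (Fin n → Bool)) (f : (Fin n → Bool) → Bool)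
    (hdep : ∀ k : Fin n, ∃ X ∈ D, Function.update X k (!(X k)) ∈ D ∧
      f X ≠ f (Function.update X k (!(X k))))
    (hβ : ∃ β : Option (Fin n) → ℝ, (∀ i, 0 ≤ β i) ∧ (∑ i, β i) = 1 ∧
      ∀ x ∈ D, f x = false → ∀ y ∈ D, f y = true →
        β none + ∑ i : Fin n, β (some i) * (if x i = y i then 1 else -1) = 0) :
    n ≤ 2 := by
  obtain ⟨β, hβ0, hβsum, hβeq⟩ := hβ
  have hsum' : β none + ∑ i : Fin n, β (some i) = 1 := by
    rw [← hβsum, Fintype.sum_option]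
  have key : ∀ x ∈ D, ∀ y ∈ D, f x = false → f y = true →
      ∀ k : Fin n, (∀ i, i ≠ k → x i = y i) → x k ≠ y k → β (some k) = 1/2 := by
    intro x hx y hy hfx hfy k hagree hdiff
    have h := hβeq x hx hfx y hy hfy
    have hterm : ∀ i : Fin n, β (some i) * (if x i = y i then (1:ℝ) else -1)
        = β (some i) - (if i = k then 2 * β (some k) else 0) := by
      intro i
      by_cases hik : i = k
      · subst hik
        rw [if_neg hdiff, if_pos rfl]; ring
      · rw [if_pos (hagree i hik), if_neg hik]; ring
    rw [Finset.sum_congr rfl (fun i _ => hterm i), Finset.sum_sub_distrib,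
      Finset.sum_ite_eq' Finset.univ k (fun _ => 2 * β (some k))] at h
    simp only [Finset.mem_univ, if_true] at h
    linarith
  have hhalf : ∀ k : Fin n, β (some k) = 1/2 := by
    intro k
    obtain ⟨X, hXD, hX'D, hne⟩ := hdep k
    have hagree : ∀ i, i ≠ k → X i = Function.update X k (!(X k)) i := by
      intro i hik; rw [Function.update_of_ne hik]
    have hdiff : X k ≠ Function.update X k (!(X k)) k := by
      rw [Function.update_self]; simp
    cases hX : f X with
    | false =>
        have hX' : f (Function.update X k (!(X k))) = true := by
          cases h' : f (Function.update X k (!(X k))) with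
          | true => rfl
          | false => exact absurd (hX.trans h'.symm) hne
        exact key X hXD _ hX'D hX hX' k hagree hdiff
    | true =>
        have hX' : f (Function.update X k (!(X k))) = false := by
          cases h' : f (Function.update X k (!(X k))) with
          | false => rfl
          | true => exact absurd (hX.trans h'.symm) hne
        exact key _ hX'D X hXD hX' hX k (fun i hik => (hagree i hik).symm) (Ne.symm hdiff)
  have hs : ∑ i : Fin n, β (some i) = (n : ℝ) / 2 := by
    rw [Finset.sum_congr rfl (fun i _ => hhalf i)]
    simp [Finset.sum_const]
    ring
  have h0 : 0 ≤ β none := hβ0 none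
  have : (n : ℝ) ≤ 2 := by rw [hs] at hsum'; linarith
  exact_mod_cast this
end

section
/- Let f : D → {0,1} be a 2-bit partial Boolean function (D ⊆ {0,1}²) such that for each k ∈ {1,2} there exist X, X' ∈ D that differ exactly in the k-th coordinate and satisfy f(X) ≠ f(X'). If there exists a vector β = (β_0, β_1, β_2) with β_i ≥ 0, β_0 + β_1 + β_2 = 1, and β_0 + β_1·(−1)^{x_1 ⊕ y_1} + β_2·(−1)^{x_2 ⊕ y_2} = 0 for every x ∈ D with f(x) = 0 and every y ∈ D with f(y) = 1, then either f(x) = x_1 ⊕ x_2 for all x ∈ D, or f(x) = 1 ⊕ x_1 ⊕ x_2 for all x ∈ D. -/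
open scoped BigOperators

theorem stmt_4 (D : Set (Fin 2 → Bool)) (f : (Fin 2 → Bool) → Bool)
    (hdep : ∀ k : Fin 2, ∃ X ∈ D, Function.update X k (!(X k)) ∈ D ∧
      f X ≠ f (Function.update X k (!(X k))))
    (hβ : ∃ β : Option (Fin 2) → ℝ, (∀ i, 0 ≤ β i) ∧ (∑ i, β i) = 1 ∧
      ∀ x ∈ D, f x = false → ∀ y ∈ D, f y = true →
        β none + ∑ i : Fin 2, β (some i) * (if x i = y i then 1 else -1) = 0) :
    (∀ x ∈ D, f x = xor (x 0) (x 1)) ∨ (∀ x ∈ D, f x = !(xor (x 0) (x 1))) := by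
  have bne : ∀ u v : Bool, u ≠ v → u = !v := by decide
  have hbool1 : ∀ p q r s : Bool, p = r → ¬(q = s) → xor p q ≠ xor r s := by decide
  have hbool2 : ∀ p q r s : Bool, ¬(p = r) → q = s → xor p q ≠ xor r s := by decide
  obtain ⟨β, hpos, hsum, hcon⟩ := hβ
  have hsum' : β none + (β (some 0) + β (some 1)) = 1 := by
    simpa [Fintype.sum_option, Fin.sum_univ_two] using hsum
  have hcoord : ∀ k : Fin 2,
      β none + (β (some 0) * (if k = 0 then -1 else 1)
        + β (some 1) * (if k = 1 then -1 else 1)) = 0 := by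
    intro k
    obtain ⟨X, hXD, hX'D, hne⟩ := hdep k
    set Y := Function.update X k (!(X k)) with hY
    have hXY : ∀ i : Fin 2, (X i = Y i) ↔ ¬ (k = i) := by
      intro i
      by_cases h : k = i
      · subst h
        simp [hY, Function.update_self]
      · simp [hY, Function.update_of_ne (Ne.symm h), h]
    have main : ∀ x y : Fin 2 → Bool, x ∈ D → y ∈ D → f x = false → f y = true →
        ((∀ i : Fin 2, (x i = y i) ↔ ¬ (k = i)) ∨ (∀ i : Fin 2, (y i = x i) ↔ ¬ (k = i))) →
        β none + (β (some 0) * (if k = 0 then -1 else 1)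
          + β (some 1) * (if k = 1 then -1 else 1)) = 0 := by
      intro x y hx hy hfx hfy hiff
      have h := hcon x hx hfx y hy hfy
      rw [Fin.sum_univ_two] at h
      have h0 : (x 0 = y 0) ↔ ¬ (k = 0) := by
        rcases hiff with hi | hi
        · exact hi 0
        · constructor
          · intro he; exact (hi 0).mp he.symm
          · intro hk; exact ((hi 0).mpr hk).symm
      have h1 : (x 1 = y 1) ↔ ¬ (k = 1) := by
        rcases hiff with hi | hi
        · exact hi 1
        · constructor
          · intro he; exact (hi 1).mp he.symm
          · intro hk; exact ((hi 1).mpr hk).symm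
      by_cases hk0 : k = 0
      · have hk1 : ¬ (k = 1) := by subst hk0; decide
        have hx0 : ¬ (x 0 = y 0) := by simp [h0, hk0]
        have hx1 : x 1 = y 1 := h1.mpr hk1
        subst hk0
        norm_num [hx0, hx1] at h ⊢
        linarith
      · have hk1 : k = 1 := by omega
        have hx0 : x 0 = y 0 := h0.mpr hk0
        have hx1 : ¬ (x 1 = y 1) := by simp [h1, hk1]
        subst hk1
        norm_num [hx0, hx1] at h ⊢
        linarith
    cases hfX : f X
    · have hfY : f Y = true := by
        cases h' : f Y
        · exact absurd (hfX.trans h'.symm) hne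
        · rfl
      exact main X Y hXD hX'D hfX hfY (Or.inl hXY)
    · have hfY : f Y = false := by
        cases h' : f Y
        · rfl
        · exact absurd (hfX.trans h'.symm) hne
      exact main Y X hX'D hXD hfY hfX (Or.inr hXY)
  have e0 := hcoord 0
  have e1 := hcoord 1
  norm_num at e0 e1
  have hn : β none = 0 := by linarith
  have ha : β (some 0) = 1/2 := by linarith
  have hb2 : β (some 1) = 1/2 := by linarith
  have key : ∀ x ∈ D, f x = false → ∀ y ∈ D, f y = true →
      xor (x 0) (x 1) ≠ xor (y 0) (y 1) := by
    intro x hx hfx y hy hfy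
    have h := hcon x hx hfx y hy hfy
    rw [Fin.sum_univ_two, hn, ha, hb2] at h
    by_cases h0 : x 0 = y 0 <;> by_cases h1 : x 1 = y 1
    · norm_num [h0, h1] at h
    · exact hbool1 _ _ _ _ h0 h1
    · exact hbool2 _ _ _ _ h0 h1
    · norm_num [h0, h1] at h
  obtain ⟨X, hXD, hX'D, hne⟩ := hdep 0
  obtain ⟨a, haD, hfa, b, hbD, hfb⟩ :
      ∃ a, a ∈ D ∧ f a = false ∧ ∃ b, b ∈ D ∧ f b = true := by
    cases hfX : f X
    · refine ⟨X, hXD, hfX, _, hX'D, ?_⟩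
      cases h' : f (Function.update X 0 (!(X 0)))
      · exact absurd (hfX.trans h'.symm) hne
      · rfl
    · refine ⟨_, hX'D, ?_, X, hXD, hfX⟩
      cases h' : f (Function.update X 0 (!(X 0)))
      · rfl
      · exact absurd (hfX.trans h'.symm) hne
  have hab := key a haD hfa b hbD hfb
  cases hxb : xor (b 0) (b 1)
  · right
    intro x hxD
    cases hfx : f x
    · have hx := key x hxD hfx b hbD hfb
      rw [hxb] at hx
      rw [bne _ _ hx]
      rfl
    · have hax := key a haD hfa x hxD hfx
      rw [hxb] at hab
      rw [bne _ _ hab] at hax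
      have h2 : xor (x 0) (x 1) = !true := bne _ _ (Ne.symm hax)
      rw [h2]
      rfl
  · left
    intro x hxD
    cases hfx : f x
    · have hx := key x hxD hfx b hbD hfb
      rw [hxb] at hx
      rw [bne _ _ hx]
      rfl
    · have hax := key a haD hfa x hxD hfx
      rw [hxb] at hab
      rw [bne _ _ hab] at hax
      have h2 : xor (x 0) (x 1) = !false := bne _ _ (Ne.symm hax)
      rw [h2]
      rfl
end

section
/- For every n ≥ 1, the number of n-bit partial Boolean functions that depend on n bits is at least 2·3^{2^n − n − 1}. Here n-bit partial Boolean functions are identified with maps F : {0,1}^n → {0,1,*}, the domain D of the partial Boolean function being the set of inputs not mapped to *. -/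
open scoped BigOperators

/-! ### Auxiliary material for the proof of `stmt_5` -/

noncomputable section StmtFiveAux
open MvPolynomial

variable {n : ℕ}

/-- Real indicator vector of a Boolean point. -/
def stmt5Ind (x : Fin n → Bool) : Fin n → ℝ := fun i => if x i then 1 else 0

/-- One factor of the Boolean interpolation polynomial. -/
def stmt5Factor (y : Fin n → Bool) (i : Fin n) : MvPolynomial (Fin n) ℝ :=
  if y i then X i else 1 - X i

/-- The multilinear interpolation polynomial of `g` on the Boolean cube. -/
def stmt5Interp (g : (Fin n → Bool) → ℝ) : MvPolynomial (Fin n) ℝ :=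
  ∑ y : Fin n → Bool, C (g y) * ∏ i, stmt5Factor y i

lemma stmt5_degreeOf_factor (y : Fin n → Bool) (i j : Fin n) :
    (stmt5Factor y i).degreeOf j ≤ if j = i then 1 else 0 := by
  have h1 : (X i : MvPolynomial (Fin n) ℝ).degreeOf j = if j = i then 1 else 0 :=
    degreeOf_X j i
  unfold stmt5Factor
  split
  · rw [h1]
  · have h2 : (1 - X i : MvPolynomial (Fin n) ℝ) = C 1 + C (-1) * X i := by
      simp [map_one, map_neg]; ring
    rw [h2]
    refine (degreeOf_add_le _ _ _).trans ?_
    exact max_le (by rw [degreeOf_C]; exact Nat.zero_le _) ((degreeOf_C_mul_le (X i) j (-1 : ℝ)).trans h1.le)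

lemma stmt5_interp_multilinear (g : (Fin n → Bool) → ℝ) :
    IsMultilinear (stmt5Interp g) := by
  intro j
  refine (degreeOf_sum_le _ _ _).trans (Finset.sup_le fun y _ => ?_)
  refine (degreeOf_C_mul_le _ _ _).trans ?_
  refine (degreeOf_prod_le _ _ _).trans ?_
  calc ∑ i, (stmt5Factor y i).degreeOf j ≤ ∑ i, if j = i then 1 else 0 :=
        Finset.sum_le_sum fun i _ => stmt5_degreeOf_factor y i j
    _ = 1 := by simp

lemma stmt5_eval_interp (g : (Fin n → Bool) → ℝ) (x : Fin n → Bool) :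
    eval (stmt5Ind x) (stmt5Interp g) = g x := by
  unfold stmt5Interp
  rw [map_sum]
  have key : ∀ y : Fin n → Bool,
      eval (stmt5Ind x) (C (g y) * ∏ i, stmt5Factor y i) = if y = x then g y else 0 := by
    intro y
    rw [map_mul, eval_C, map_prod]
    have hf : ∀ i, eval (stmt5Ind x) (stmt5Factor y i) = if y i = x i then 1 else 0 := by
      intro i
      unfold stmt5Factor stmt5Ind
      cases hy : y i <;> cases hx : x i <;> simp [hy, hx]
    simp only [hf]
    rw [Finset.prod_boole]
    by_cases h : y = x
    · simp [h]
    · have h1 : ¬ ∀ i ∈ Finset.univ, y i = x i := by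
        simp only [Finset.mem_univ, true_implies]
        exact fun hh => h (funext hh)
      have h2 : ¬ ∀ i, y i = x i := fun hh => h (funext hh)
      simp [h1, h, h2]
  simp only [key]
  simp

lemma stmt5_eval_congr_vars {p : MvPolynomial (Fin n) ℝ} {v w : Fin n → ℝ}
    (h : ∀ i ∈ p.vars, v i = w i) : eval v p = eval w p :=
  eval₂Hom_congr' rfl (fun i h1 _ => h i h1) rfl

/-- The all-zero point. -/
def stmt5Z (n : ℕ) : Fin n → Bool := fun _ => false

/-- The standard basis points. -/
def stmt5E (n : ℕ) (i : Fin n) : Fin n → Bool := fun j => decide (j = i)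

lemma stmt5_forcing {D : Set (Fin n → Bool)} {f : (Fin n → Bool) → Bool}
    (hz : stmt5Z n ∈ D) (he : ∀ i, stmt5E n i ∈ D)
    (hv : ∀ i, f (stmt5E n i) ≠ f (stmt5Z n))
    {p : MvPolynomial (Fin n) ℝ} (hp : Represents p D f) : p.vars = Finset.univ := by
  refine Finset.eq_univ_iff_forall.2 fun i => ?_
  by_contra hi
  have heq : eval (stmt5Ind (stmt5Z n)) p = eval (stmt5Ind (stmt5E n i)) p := by
    refine stmt5_eval_congr_vars fun j hj => ?_
    have hji : j ≠ i := fun h => hi (h ▸ hj)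
    simp [stmt5Ind, stmt5Z, stmt5E, hji]
  have h1 := hp _ hz
  have h2 := hp _ (he i)
  rw [show (fun j => if stmt5Z n j then (1:ℝ) else 0) = stmt5Ind (stmt5Z n) from rfl] at h1
  rw [show (fun j => if stmt5E n i j then (1:ℝ) else 0) = stmt5Ind (stmt5E n i) from rfl] at h2
  rw [heq, h2] at h1
  refine hv i ?_
  cases hfz : f (stmt5Z n) <;> cases hfe : f (stmt5E n i) <;> simp [hfz, hfe] at h1 ⊢

end StmtFiveAux

/-- Partial Boolean functions are identified with maps
`F : {0,1}^n → {0,1,*}` (with `*` encoded as `none`). -/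
theorem stmt_5 (n : ℕ) (hn : 1 ≤ n) :
    2 * 3 ^ (2 ^ n - n - 1) ≤
      Set.ncard {F : (Fin n → Bool) → Option Bool |
        DependsOnBits {x | F x ≠ none} (fun x => (F x).getD false) n} := by
  classical
  -- special points
  have heinj : Function.Injective (stmt5E n) := by
    intro a b hab
    have := congrFun hab a
    simpa [stmt5E] using this.symm
  set spec : Finset (Fin n → Bool) :=
    insert (stmt5Z n) (Finset.image (stmt5E n) Finset.univ) with hspec
  have hznotin : stmt5Z n ∉ Finset.image (stmt5E n) Finset.univ := by
    simp only [Finset.mem_image, Finset.mem_univ, true_and, not_exists]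
    intro i h
    have := congrFun h i
    simp [stmt5E, stmt5Z] at this
  have hcard : spec.card = n + 1 := by
    rw [hspec, Finset.card_insert_of_notMem hznotin,
      Finset.card_image_of_injective _ heinj, Finset.card_univ, Fintype.card_fin]
  have hzmem : stmt5Z n ∈ spec := Finset.mem_insert_self _ _
  have hemem : ∀ i, stmt5E n i ∈ spec := fun i =>
    Finset.mem_insert_of_mem (Finset.mem_image_of_mem _ (Finset.mem_univ i))
  have heneqz : ∀ i, stmt5E n i ≠ stmt5Z n := by
    intro i h
    have := congrFun h i
    simp [stmt5E, stmt5Z] at this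
  -- the injection
  set Φ : Bool × ({x : Fin n → Bool // x ∉ spec} → Option Bool) →
      ((Fin n → Bool) → Option Bool) := fun a x =>
    if h : x ∈ spec then (if x = stmt5Z n then some a.1 else some (!a.1)) else a.2 ⟨x, h⟩
    with hΦ
  have hΦz : ∀ a, Φ a (stmt5Z n) = some a.1 := by
    intro a; simp [hΦ, hzmem]
  have hΦe : ∀ a i, Φ a (stmt5E n i) = some (!a.1) := by
    intro a i; simp [hΦ, hemem i, heneqz i]
  -- each Φ a is in the set
  have hmem : ∀ a, Φ a ∈ {F : (Fin n → Bool) → Option Bool |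
      DependsOnBits {x | F x ≠ none} (fun x => (F x).getD false) n} := by
    intro a
    set F := Φ a with hF
    set D : Set (Fin n → Bool) := {x | F x ≠ none} with hD
    set f : (Fin n → Bool) → Bool := fun x => (F x).getD false with hf
    have hzD : stmt5Z n ∈ D := by simp [hD, hF, hΦz a]
    have heD : ∀ i, stmt5E n i ∈ D := by intro i; simp [hD, hF, hΦe a i]
    have hfz : f (stmt5Z n) = a.1 := by simp [hf, hF, hΦz a]
    have hfe : ∀ i, f (stmt5E n i) = !a.1 := by intro i; simp [hf, hF, hΦe a i]
    have hv : ∀ i, f (stmt5E n i) ≠ f (stmt5Z n) := by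
      intro i
      rw [hfz, hfe i]
      exact Bool.not_ne_self a.1
    constructor
    · -- membership : some multilinear polynomial with exactly n vars represents f
      refine ⟨stmt5Interp (fun x => if f x then 1 else 0), stmt5_interp_multilinear _,
        fun x _ => stmt5_eval_interp _ x, ?_⟩
      rw [stmt5_forcing hzD heD hv (fun x _ => stmt5_eval_interp _ x),
        Finset.card_univ, Fintype.card_fin]
    · -- lower bound
      rintro c ⟨p, _, hrep, rfl⟩
      rw [stmt5_forcing hzD heD hv hrep, Finset.card_univ, Fintype.card_fin]
  -- Φ is injective
  have hinj : Function.Injective Φ := by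
    rintro ⟨b, g⟩ ⟨b', g'⟩ h
    have hb : b = b' := by
      have := congrFun h (stmt5Z n)
      rw [hΦz ⟨b, g⟩, hΦz ⟨b', g'⟩] at this
      exact Option.some.inj this
    have hg : g = g' := by
      funext ⟨x, hx⟩
      have := congrFun h x
      rw [hΦ] at this
      simpa [dif_neg hx] using this
    simp [hb, hg]
  -- counting
  have hfin : (Set.Finite {F : (Fin n → Bool) → Option Bool |
      DependsOnBits {x | F x ≠ none} (fun x => (F x).getD false) n}) :=
    Set.toFinite _
  have hle : Nat.card (Bool × ({x : Fin n → Bool // x ∉ spec} → Option Bool)) ≤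
      Set.ncard {F : (Fin n → Bool) → Option Bool |
        DependsOnBits {x | F x ≠ none} (fun x => (F x).getD false) n} := by
    rw [← Nat.card_coe_set_eq]
    exact Nat.card_le_card_of_injective
      (fun a => (⟨Φ a, hmem a⟩ : {F : (Fin n → Bool) → Option Bool //
        F ∈ {F | DependsOnBits {x | F x ≠ none} (fun x => (F x).getD false) n}}))
      (fun a a' h => hinj (congrArg Subtype.val h))
  refine le_trans ?_ hle
  rw [Nat.card_eq_fintype_card, Fintype.card_prod, Fintype.card_bool, Fintype.card_fun,
    Fintype.card_option, Fintype.card_bool]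
  have hsub : Fintype.card {x : Fin n → Bool // x ∉ spec} = 2 ^ n - n - 1 := by
    rw [Fintype.card_subtype_compl, Fintype.card_fun, Fintype.card_bool, Fintype.card_fin]
    have : Fintype.card {x : Fin n → Bool // x ∈ spec} = spec.card := Fintype.card_coe spec
    rw [this, hcard, Nat.sub_sub]
  rw [hsub]
end

section
/- If a non-constant n-bit partial Boolean function f : D → {0,1} can be computed exactly by a quantum 1-query algorithm, then there exists a degree-1 SOS complex representation matrix of f and its negation. -/
open scoped BigOperators

section Aux

open Matrix

lemma vecNormSq_cast {K : Type*} [Fintype K] (z : K → ℂ) :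
    (vecNormSq z : ℂ) = star z ⬝ᵥ z := by
  simp only [vecNormSq, dotProduct, Pi.star_apply]
  push_cast
  exact Finset.sum_congr rfl fun i _ => (Complex.normSq_eq_conj_mul_self).trans rfl

lemma dot_self_mulVec {K : Type*} [Fintype K] (M : Matrix K K ℂ) (u : K → ℂ) :
    star (M.mulVec u) ⬝ᵥ M.mulVec u = (star u ᵥ* (Mᴴ * M)) ⬝ᵥ u := by
  rw [Matrix.star_mulVec, Matrix.dotProduct_mulVec, Matrix.vecMul_vecMul]

lemma vecNormSq_mulVec_unitary {K : Type*} [Fintype K] [DecidableEq K]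
    {U : Matrix K K ℂ} (hU : U ∈ Matrix.unitaryGroup K ℂ) (u : K → ℂ) :
    vecNormSq (U.mulVec u) = vecNormSq u := by
  have h1 : Uᴴ * U = 1 := by
    have := hU.1
    rwa [Matrix.star_eq_conjTranspose] at this
  have : (vecNormSq (U.mulVec u) : ℂ) = (vecNormSq u : ℂ) := by
    rw [vecNormSq_cast, vecNormSq_cast, dot_self_mulVec, h1, Matrix.vecMul_one]
  exact_mod_cast this

lemma vecNormSq_pyth {K : Type*} [Fintype K] [DecidableEq K]
    (P : Matrix K K ℂ) (hP : P.IsHermitian) (hP2 : P * P = P) (u : K → ℂ) :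
    vecNormSq (P.mulVec u) + vecNormSq ((1 - P).mulVec u) = vecNormSq u := by
  have h1 : Pᴴ * P = P := by rw [hP.eq, hP2]
  have h2 : (1 - P)ᴴ * (1 - P) = 1 - P := by
    rw [Matrix.conjTranspose_sub, Matrix.conjTranspose_one, hP.eq]
    rw [Matrix.sub_mul, Matrix.mul_sub, Matrix.mul_sub, hP2]
    simp only [Matrix.one_mul, Matrix.mul_one]
    abel
  have : ((vecNormSq (P.mulVec u) + vecNormSq ((1 - P).mulVec u) : ℝ) : ℂ)
      = ((vecNormSq u : ℝ) : ℂ) := by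
    push_cast
    rw [vecNormSq_cast, vecNormSq_cast, vecNormSq_cast, dot_self_mulVec,
      dot_self_mulVec, h1, h2, ← add_dotProduct, ← Matrix.vecMul_add]
    simp
  exact_mod_cast this

end Aux

theorem stmt_6 (n : ℕ) (D : Set (Fin n → Bool)) (f : (Fin n → Bool) → Bool)
    (hnc : (∃ x ∈ D, f x = false) ∧ (∃ y ∈ D, f y = true))
    (h : ComputedExactly1 D f) :
    ∃ p q : ℕ, 1 ≤ p ∧ 1 ≤ q ∧ ∃ α : Fin (p + q) → Option (Fin n) → ℂ,
      SOSRep D f p q α := by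
  classical
  obtain ⟨m, hm, ψ, hψ, U₀, U₁, P, hU₀, hU₁, hPh, hP2, halg⟩ := h
  set N := Fintype.card (Option (Fin n) × Fin m) with hN
  have hNpos : 1 ≤ N := Fintype.card_pos_iff.mpr ⟨(none, ⟨0, hm⟩)⟩
  let e : Fin N ≃ (Option (Fin n) × Fin m) := (Fintype.equivFin _).symm
  let v : Option (Fin n) × Fin m → ℂ := U₀.mulVec ψ
  let A := P * U₁
  let B := (1 - P) * U₁
  let c : Matrix (Option (Fin n) × Fin m) (Option (Fin n) × Fin m) ℂ →
      (Option (Fin n) × Fin m) → Option (Fin n) → ℂ :=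
    fun M k i => ∑ j, M k (i, j) * v (i, j)
  -- the oracle applied to v
  have worcle : ∀ (x : Fin n → Bool) (p : Option (Fin n) × Fin m),
      ((oracleMat n m x).mulVec v) p = fourierVec x p.1 * v p := by
    intro x p
    rcases p with ⟨i | i, j⟩ <;> simp [oracleMat, Matrix.mulVec_diagonal, fourierVec]
  have key : ∀ (M : Matrix (Option (Fin n) × Fin m) (Option (Fin n) × Fin m) ℂ)
      (x : Fin n → Bool) (k : Option (Fin n) × Fin m),
      (M.mulVec ((oracleMat n m x).mulVec v)) k = ∑ i, c M k i * fourierVec x i := by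
    intro M x k
    have hw : (oracleMat n m x).mulVec v = fun p => fourierVec x p.1 * v p :=
      funext (worcle x)
    have : (M.mulVec ((oracleMat n m x).mulVec v)) k
        = ∑ p : Option (Fin n) × Fin m, M k p * (fourierVec x p.1 * v p) := by
      rw [hw]; simp only [Matrix.mulVec, dotProduct]
    rw [this, Fintype.sum_prod_type]
    simp only [c, Finset.sum_mul]
    refine Finset.sum_congr rfl fun i _ => Finset.sum_congr rfl fun j _ => by ring
  have keysum : ∀ (M : Matrix (Option (Fin n) × Fin m) (Option (Fin n) × Fin m) ℂ)
      (x : Fin n → Bool),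
      ∑ l : Fin N, Complex.normSq (∑ i, c M (e l) i * fourierVec x i)
        = vecNormSq (M.mulVec ((oracleMat n m x).mulVec v)) := by
    intro M x
    rw [show vecNormSq (M.mulVec ((oracleMat n m x).mulVec v))
        = ∑ k, Complex.normSq ((M.mulVec ((oracleMat n m x).mulVec v)) k) from rfl]
    rw [← e.sum_comp fun k => Complex.normSq ((M.mulVec ((oracleMat n m x).mulVec v)) k)]
    exact Finset.sum_congr rfl fun l _ => by rw [key]
  -- oracle preserves norm
  have oracle_norm : ∀ (x : Fin n → Bool) (u : Option (Fin n) × Fin m → ℂ),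
      vecNormSq ((oracleMat n m x).mulVec u) = vecNormSq u := by
    intro x u
    simp only [vecNormSq]
    refine Finset.sum_congr rfl fun p _ => ?_
    rcases p with ⟨i | i, j⟩
    · simp [oracleMat, Matrix.mulVec_diagonal]
    · by_cases hx : x i <;> simp [oracleMat, Matrix.mulVec_diagonal, hx, Complex.normSq_mul]
  -- total norm after oracle and U₁
  have hAB : ∀ x : Fin n → Bool,
      vecNormSq (A.mulVec ((oracleMat n m x).mulVec v))
        + vecNormSq (B.mulVec ((oracleMat n m x).mulVec v)) = 1 := by
    intro x
    have h1 : A.mulVec ((oracleMat n m x).mulVec v)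
        = P.mulVec (U₁.mulVec ((oracleMat n m x).mulVec v)) := by
      show (P * U₁).mulVec _ = _
      rw [← Matrix.mulVec_mulVec]
    have h2 : B.mulVec ((oracleMat n m x).mulVec v)
        = (1 - P).mulVec (U₁.mulVec ((oracleMat n m x).mulVec v)) := by
      show ((1 - P) * U₁).mulVec _ = _
      rw [← Matrix.mulVec_mulVec]
    rw [h1, h2, vecNormSq_pyth P hPh hP2, vecNormSq_mulVec_unitary hU₁, oracle_norm,
      vecNormSq_mulVec_unitary hU₀, hψ]
  -- value on the promised set
  have hAval : ∀ x ∈ D, vecNormSq (A.mulVec ((oracleMat n m x).mulVec v))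
      = if f x then 1 else 0 := by
    intro x hx
    have : A.mulVec ((oracleMat n m x).mulVec v)
        = (P * U₁ * oracleMat n m x * U₀).mulVec ψ := by
      simp only [v, A, Matrix.mulVec_mulVec, mul_assoc]
    rw [this]
    exact halg x hx
  refine ⟨N, N, hNpos, hNpos,
    Fin.append (fun l i => (starRingEnd ℂ) (c A (e l) i))
      (fun l i => (starRingEnd ℂ) (c B (e l) i)), ?_, ?_, ?_⟩
  · intro x hx
    have : ∀ l : Fin N,
        Complex.normSq (∑ i, (starRingEnd ℂ)
          (Fin.append (fun l i => (starRingEnd ℂ) (c A (e l) i))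
            (fun l i => (starRingEnd ℂ) (c B (e l) i)) (Fin.castAdd N l) i) * fourierVec x i)
        = Complex.normSq (∑ i, c A (e l) i * fourierVec x i) := by
      intro l; rw [Fin.append_left]; simp
    rw [Finset.sum_congr rfl fun l _ => this l, keysum, hAval x hx]
  · intro x hx
    have : ∀ l : Fin N,
        Complex.normSq (∑ i, (starRingEnd ℂ)
          (Fin.append (fun l i => (starRingEnd ℂ) (c A (e l) i))
            (fun l i => (starRingEnd ℂ) (c B (e l) i)) (Fin.natAdd N l) i) * fourierVec x i)
        = Complex.normSq (∑ i, c B (e l) i * fourierVec x i) := by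
      intro l; rw [Fin.append_right]; simp
    rw [Finset.sum_congr rfl fun l _ => this l, keysum]
    have h1 := hAB x
    have h2 := hAval x hx
    rw [h2] at h1
    cases hfx : f x <;> rw [hfx] at h1 <;> simp at h1 ⊢ <;> linarith
  · intro x
    rw [Fin.sum_univ_add]
    have hA : ∀ l : Fin N,
        Complex.normSq (∑ i, (starRingEnd ℂ)
          (Fin.append (fun l i => (starRingEnd ℂ) (c A (e l) i))
            (fun l i => (starRingEnd ℂ) (c B (e l) i)) (Fin.castAdd N l) i) * fourierVec x i)
        = Complex.normSq (∑ i, c A (e l) i * fourierVec x i) := by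
      intro l; rw [Fin.append_left]; simp
    have hB : ∀ l : Fin N,
        Complex.normSq (∑ i, (starRingEnd ℂ)
          (Fin.append (fun l i => (starRingEnd ℂ) (c A (e l) i))
            (fun l i => (starRingEnd ℂ) (c B (e l) i)) (Fin.natAdd N l) i) * fourierVec x i)
        = Complex.normSq (∑ i, c B (e l) i * fourierVec x i) := by
      intro l; rw [Fin.append_right]; simp
    rw [Finset.sum_congr rfl fun l _ => hA l, Finset.sum_congr rfl fun l _ => hB l,
      keysum, keysum]
    exact hAB x
end

section
/- Let f : D → {0,1} be a non-constant n-bit partial Boolean function. Then f can be computed exactly by a quantum 1-query algorithm if and only if there exists a degree-1 SOS complex representation matrix of f and its negation, given by vectors α¹, …, α^{p+q} ∈ ℂ^{n+1}, whose n+1 columns (α¹_i, …, α^{p+q}_i) ∈ ℂ^{p+q}, for i ∈ {0,1,…,n}, are pairwise orthogonal. -/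
open scoped BigOperators

namespace Stmt7Aux
open Matrix

lemma vecNormSq_coe {ι : Type*} [Fintype ι] (v : ι → ℂ) :
    ((vecNormSq v : ℝ) : ℂ) = star v ⬝ᵥ v := by
  simp [vecNormSq, dotProduct, Complex.normSq_eq_conj_mul_self]

lemma dot_mulVec_mulVec {ι : Type*} [Fintype ι] [DecidableEq ι] (M : Matrix ι ι ℂ) (u v : ι → ℂ) :
    star (M *ᵥ u) ⬝ᵥ (M *ᵥ v) = star u ᵥ* (Mᴴ * M) ⬝ᵥ v := by
  rw [star_mulVec, dotProduct_mulVec, vecMul_vecMul]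

lemma vecNormSq_mulVec_unitary {ι : Type*} [Fintype ι] [DecidableEq ι]
    {M : Matrix ι ι ℂ} (hM : M ∈ Matrix.unitaryGroup ι ℂ) (v : ι → ℂ) :
    vecNormSq (M *ᵥ v) = vecNormSq v := by
  have h := dot_mulVec_mulVec M v v
  rw [show Mᴴ * M = 1 from Matrix.mem_unitaryGroup_iff'.mp hM] at h
  have : ((vecNormSq (M *ᵥ v) : ℝ) : ℂ) = ((vecNormSq v : ℝ) : ℂ) := by
    rw [vecNormSq_coe, vecNormSq_coe, h, vecMul_one]
  exact_mod_cast this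

lemma oracleMat_eq (n m : ℕ) (x : Fin n → Bool) :
    oracleMat n m x = Matrix.diagonal (fun p => fourierVec x p.1) := by
  unfold oracleMat fourierVec
  congr 1

lemma fourierVec_conj {n : ℕ} (x : Fin n → Bool) (i : Option (Fin n)) :
    (starRingEnd ℂ) (fourierVec x i) = fourierVec x i := by
  cases i <;> simp [fourierVec] <;> split <;> simp

lemma fourierVec_sq {n : ℕ} (x : Fin n → Bool) (i : Option (Fin n)) :
    fourierVec x i * fourierVec x i = 1 := by
  cases i <;> simp [fourierVec] <;> split <;> simp

lemma oracleMat_unitary (n m : ℕ) (x : Fin n → Bool) :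
    oracleMat n m x ∈ Matrix.unitaryGroup (Option (Fin n) × Fin m) ℂ := by
  rw [Matrix.mem_unitaryGroup_iff', oracleMat_eq]
  rw [Matrix.star_eq_conjTranspose, Matrix.diagonal_conjTranspose, diagonal_mul_diagonal]
  have : (fun i : Option (Fin n) × Fin m => star (fun p => fourierVec x p.1) i * fourierVec x i.1)
      = fun _ => (1 : ℂ) := by
    funext b
    simp only [Pi.star_apply, RCLike.star_def]
    rw [fourierVec_conj, fourierVec_sq]
  rw [this, Matrix.diagonal_one]

lemma key_expand {n m : ℕ} (M U₀ : Matrix (Option (Fin n) × Fin m) (Option (Fin n) × Fin m) ℂ)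
    (ψ : Option (Fin n) × Fin m → ℂ) (x : Fin n → Bool) (b : Option (Fin n) × Fin m) :
    ((M * oracleMat n m x * U₀) *ᵥ ψ) b
      = ∑ i, (starRingEnd ℂ) ((starRingEnd ℂ) (∑ j, M b (i, j) * (U₀ *ᵥ ψ) (i, j)))
          * fourierVec x i := by
  have : (M * oracleMat n m x * U₀) *ᵥ ψ = (M * oracleMat n m x) *ᵥ (U₀ *ᵥ ψ) := by
    rw [mulVec_mulVec]
  rw [this]
  simp only [Complex.conj_conj]
  rw [oracleMat_eq, mulVec, dotProduct]
  rw [Fintype.sum_prod_type]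
  congr 1; funext i
  rw [Finset.sum_mul]
  congr 1; funext j
  rw [Matrix.mul_diagonal]
  ring

lemma vecNormSq_expand {n m : ℕ}
    (M U₀ : Matrix (Option (Fin n) × Fin m) (Option (Fin n) × Fin m) ℂ)
    (ψ : Option (Fin n) × Fin m → ℂ) (x : Fin n → Bool) :
    vecNormSq ((M * oracleMat n m x * U₀) *ᵥ ψ)
      = ∑ b, Complex.normSq (∑ i,
          (starRingEnd ℂ) ((starRingEnd ℂ) (∑ j, M b (i, j) * (U₀ *ᵥ ψ) (i, j)))
            * fourierVec x i) := by
  unfold vecNormSq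
  exact Finset.sum_congr rfl fun b _ => by rw [key_expand]

end Stmt7Aux

namespace Stmt7Aux
open Matrix
open scoped InnerProductSpace

lemma euclid_inner {ι : Type*} [Fintype ι] (u v : EuclideanSpace ℂ ι) :
    ⟪u, v⟫_ℂ = ∑ b, (starRingEnd ℂ) (u b) * v b := by
  simp [PiLp.inner_apply, RCLike.inner_apply]
  exact Finset.sum_congr rfl fun _ _ => mul_comm _ _

lemma orthonormal_normalized_restrict {B ι : Type*} [Fintype B] (gi : B → ι)
    (u : ι → EuclideanSpace ℂ B)
    (horth : ∀ i j, i ≠ j → ⟪u i, u j⟫_ℂ = 0)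
    (S : Set B) (hinj : ∀ b ∈ S, ∀ b' ∈ S, gi b = gi b' → b = b')
    (hne : ∀ b ∈ S, u (gi b) ≠ 0) :
    Orthonormal ℂ (S.restrict fun b => ((‖u (gi b)‖ : ℂ))⁻¹ • u (gi b)) := by
  classical
  rw [orthonormal_iff_ite]
  rintro ⟨b, hb⟩ ⟨b', hb'⟩
  by_cases hbb : b = b'
  · subst hbb
    rw [if_pos rfl]
    have h0 : u (gi b) ≠ 0 := hne b hb
    have hn : (‖u (gi b)‖ : ℂ) ≠ 0 := by
      simpa using (norm_ne_zero_iff.mpr h0)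
    rw [Set.restrict, Set.domRestrict_apply, inner_smul_left, inner_smul_right,
      inner_self_eq_norm_sq_to_K, map_inv₀, Complex.conj_ofReal]
    field_simp
    rfl
  · have hgi : gi b ≠ gi b' := fun h => hbb (hinj b hb b' hb' h)
    rw [if_neg (by simp [Subtype.mk.injEq, hbb])]
    rw [Set.restrict, Set.domRestrict_apply, Set.domRestrict_apply, inner_smul_left, inner_smul_right,
      horth _ _ hgi, mul_zero, mul_zero]

lemma exists_isometryEquiv {B ι : Type*} [Fintype B] [DecidableEq B] [Fintype ι] [Nonempty ι]
    (g : ι → B) (hg : Function.Injective g) (s t : ι → EuclideanSpace ℂ B)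
    (horth : ∀ i j, i ≠ j → ⟪s i, s j⟫_ℂ = 0)
    (hsame : ∀ i j, ⟪s i, s j⟫_ℂ = ⟪t i, t j⟫_ℂ) :
    ∃ L : EuclideanSpace ℂ B ≃ₗᵢ[ℂ] EuclideanSpace ℂ B, ∀ i, L (s i) = t i := by
  classical
  have horth' : ∀ i j, i ≠ j → ⟪t i, t j⟫_ℂ = 0 := fun i j hij => (hsame i j).symm ▸ horth i j hij
  have hnorm : ∀ i, ‖t i‖ = ‖s i‖ := by
    intro i
    have h := hsame i i
    rw [inner_self_eq_norm_sq_to_K, inner_self_eq_norm_sq_to_K] at h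
    have h2 : (‖s i‖ : ℝ) ^ 2 = ‖t i‖ ^ 2 := by exact_mod_cast h
    nlinarith [norm_nonneg (s i), norm_nonneg (t i)]
  set gi : B → ι := Function.invFun g with hgi
  have hgig : ∀ i, gi (g i) = i := fun i => Function.leftInverse_invFun hg i
  set S : Set B := {b | (∃ i, g i = b) ∧ s (gi b) ≠ 0} with hS
  have hbS : ∀ b ∈ S, g (gi b) = b := by
    rintro b ⟨⟨i, hi⟩, -⟩
    rw [← hi, hgig]
  have hinj : ∀ b ∈ S, ∀ b' ∈ S, gi b = gi b' → b = b' := by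
    intro b hb b' hb' h
    rw [← hbS b hb, ← hbS b' hb', h]
  have hcard : Module.finrank ℂ (EuclideanSpace ℂ B) = Fintype.card B := finrank_euclideanSpace
  have honv : Orthonormal ℂ (S.restrict fun b => ((‖s (gi b)‖ : ℂ))⁻¹ • s (gi b)) :=
    orthonormal_normalized_restrict gi s horth S hinj (fun b hb => hb.2)
  have honw : Orthonormal ℂ (S.restrict fun b => ((‖t (gi b)‖ : ℂ))⁻¹ • t (gi b)) := by
    refine orthonormal_normalized_restrict gi t horth' S hinj (fun b hb h => ?_)
    exact hb.2 (norm_eq_zero.mp (by rw [← hnorm, h, norm_zero]))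
  obtain ⟨b₁, hb₁⟩ := honv.exists_orthonormalBasis_extension_of_card_eq hcard
  obtain ⟨b₂, hb₂⟩ := honw.exists_orthonormalBasis_extension_of_card_eq hcard
  refine ⟨b₁.repr.trans b₂.repr.symm, fun i => ?_⟩
  by_cases hsi : s i = 0
  · have hti : t i = 0 := by
      rw [← norm_eq_zero, hnorm, norm_eq_zero]; exact hsi
    rw [hsi, hti, map_zero]
  · have hbmem : g i ∈ S := ⟨⟨i, rfl⟩, by rw [hgig]; exact hsi⟩
    have hsn : (‖s i‖ : ℂ) ≠ 0 := by simpa using (norm_ne_zero_iff.mpr hsi)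
    have h1 : b₁ (g i) = ((‖s i‖ : ℂ))⁻¹ • s i := by
      rw [hb₁ (g i) hbmem]; simp [hgig]
    have h2 : b₂ (g i) = ((‖s i‖ : ℂ))⁻¹ • t i := by
      rw [hb₂ (g i) hbmem]; simp [hgig, hnorm]
    have hL : (b₁.repr.trans b₂.repr.symm) (b₁ (g i)) = b₂ (g i) := by
      rw [LinearIsometryEquiv.trans_apply, OrthonormalBasis.repr_self,
        OrthonormalBasis.repr_symm_single]
    have hs : s i = (‖s i‖ : ℂ) • b₁ (g i) := by
      rw [h1, smul_inv_smul₀ hsn]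
    rw [hs, LinearIsometryEquiv.map_smul, hL, h2, smul_inv_smul₀ hsn]

lemma exists_unitary_matrix {B : Type*} [Fintype B] [DecidableEq B]
    (L : EuclideanSpace ℂ B ≃ₗᵢ[ℂ] EuclideanSpace ℂ B) :
    ∃ U : Matrix B B ℂ, U ∈ Matrix.unitaryGroup B ℂ ∧
      ∀ v : B → ℂ, U *ᵥ v
        = (WithLp.equiv 2 (B → ℂ)) (L ((WithLp.equiv 2 (B → ℂ)).symm v)) := by
  classical
  set f : (B → ℂ) →ₗ[ℂ] (B → ℂ) :=
    (WithLp.linearEquiv 2 ℂ (B → ℂ)).toLinearMap ∘ₗ L.toLinearEquiv.toLinearMap ∘ₗ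
      (WithLp.linearEquiv 2 ℂ (B → ℂ)).symm.toLinearMap with hf
  have hfv : ∀ v : B → ℂ, f v = (WithLp.equiv 2 (B → ℂ)) (L ((WithLp.equiv 2 (B → ℂ)).symm v)) := by
    intro v
    simp [hf, WithLp.linearEquiv]
  refine ⟨LinearMap.toMatrix' f, ?_, fun v => ?_⟩
  · rw [Matrix.mem_unitaryGroup_iff']
    ext a b
    rw [Matrix.mul_apply, Matrix.one_apply]
    have hU : ∀ k c, (LinearMap.toMatrix' f) k c
        = (L ((WithLp.equiv 2 (B → ℂ)).symm (fun j => if j = c then 1 else 0))) k := by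
      intro k c
      rw [LinearMap.toMatrix'_apply, hfv]
      rw [show (Pi.single c 1 : B → ℂ) = fun j => if j = c then 1 else 0 from
        funext fun j => Pi.single_apply c 1 j]
      rfl
    simp only [Matrix.star_apply, RCLike.star_def]
    calc ∑ j, (starRingEnd ℂ) ((LinearMap.toMatrix' f) j a) * (LinearMap.toMatrix' f) j b
        = ∑ j, (starRingEnd ℂ)
            ((L ((WithLp.equiv 2 (B → ℂ)).symm fun j' => if j' = a then 1 else 0)) j)
            * (L ((WithLp.equiv 2 (B → ℂ)).symm fun j' => if j' = b then 1 else 0)) j := by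
          refine Finset.sum_congr rfl fun j _ => ?_
          rw [hU j a, hU j b]
      _ = ⟪L ((WithLp.equiv 2 (B → ℂ)).symm fun j' => if j' = a then 1 else 0),
            L ((WithLp.equiv 2 (B → ℂ)).symm fun j' => if j' = b then 1 else 0)⟫_ℂ :=
          (euclid_inner _ _).symm
      _ = ⟪((WithLp.equiv 2 (B → ℂ)).symm fun j' => if j' = a then 1 else 0),
            ((WithLp.equiv 2 (B → ℂ)).symm fun j' => if j' = b then 1 else 0)⟫_ℂ :=
          LinearIsometryEquiv.inner_map_map L _ _
      _ = if a = b then 1 else 0 := by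
          rw [euclid_inner]
          simp [Finset.sum_ite_eq, eq_comm]
  · rw [← Matrix.toLin'_apply (LinearMap.toMatrix' f) v, Matrix.toLin'_toMatrix']
    exact hfv v

end Stmt7Aux

namespace Stmt7Aux
open Matrix

lemma forward {n : ℕ} (D : Set (Fin n → Bool)) (f : (Fin n → Bool) → Bool)
    (h : ComputedExactly1 D f) :
    ∃ p q : ℕ, 1 ≤ p ∧ 1 ≤ q ∧ ∃ α : Fin (p + q) → Option (Fin n) → ℂ,
      SOSRep D f p q α ∧
      ∀ i j : Option (Fin n), i ≠ j →
        ∑ l : Fin (p + q), (starRingEnd ℂ) (α l i) * α l j = 0 := by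
  classical
  obtain ⟨m, hm, ψ, hψ, U₀, U₁, P, hU₀, hU₁, hPh, hPP, hcomp⟩ := h
  haveI : NeZero m := ⟨by omega⟩
  set N := Fintype.card (Option (Fin n) × Fin m) with hNdef
  have hN : 1 ≤ N := Fintype.card_pos
  set e : Fin N ≃ (Option (Fin n) × Fin m) :=
    (Fintype.equivFin (Option (Fin n) × Fin m)).symm with he
  set Q : Matrix (Option (Fin n) × Fin m) (Option (Fin n) × Fin m) ℂ := 1 - P with hQdef
  have hPherm : Pᴴ = P := hPh
  have hQh : Qᴴ = Q := by rw [hQdef, conjTranspose_sub, conjTranspose_one, hPherm]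
  have hQQ : Q * Q = Q := by
    rw [hQdef, Matrix.sub_mul, Matrix.mul_sub, Matrix.mul_sub, hPP]
    simp
  have hP2 : Pᴴ * P = P := by rw [hPherm, hPP]
  have hQ2 : Qᴴ * Q = Q := by rw [hQh, hQQ]
  have hPQ1 : P + Q = 1 := by rw [hQdef]; abel
  -- the split identity
  have split : ∀ x : Fin n → Bool,
      vecNormSq ((P * U₁ * oracleMat n m x * U₀) *ᵥ ψ)
        + vecNormSq ((Q * U₁ * oracleMat n m x * U₀) *ᵥ ψ) = 1 := by
    intro x
    have hVu : U₁ * oracleMat n m x * U₀ ∈ Matrix.unitaryGroup (Option (Fin n) × Fin m) ℂ :=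
      mul_mem (mul_mem hU₁ (oracleMat_unitary n m x)) hU₀
    have hv1 : vecNormSq ((U₁ * oracleMat n m x * U₀) *ᵥ ψ) = 1 := by
      rw [vecNormSq_mulVec_unitary hVu, hψ]
    have hPV : P * U₁ * oracleMat n m x * U₀ = P * (U₁ * oracleMat n m x * U₀) := by
      simp only [Matrix.mul_assoc]
    have hQV : Q * U₁ * oracleMat n m x * U₀ = Q * (U₁ * oracleMat n m x * U₀) := by
      simp only [Matrix.mul_assoc]
    have hPv : (P * (U₁ * oracleMat n m x * U₀)) *ᵥ ψ
        = P *ᵥ ((U₁ * oracleMat n m x * U₀) *ᵥ ψ) :=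
      (mulVec_mulVec ψ P (U₁ * oracleMat n m x * U₀)).symm
    have hQv : (Q * (U₁ * oracleMat n m x * U₀)) *ᵥ ψ
        = Q *ᵥ ((U₁ * oracleMat n m x * U₀) *ᵥ ψ) :=
      (mulVec_mulVec ψ Q (U₁ * oracleMat n m x * U₀)).symm
    rw [hPV, hQV, hPv, hQv]
    set v : Option (Fin n) × Fin m → ℂ := (U₁ * oracleMat n m x * U₀) *ᵥ ψ with hv
    have key : ((vecNormSq (P *ᵥ v) + vecNormSq (Q *ᵥ v) : ℝ) : ℂ)
        = ((vecNormSq v : ℝ) : ℂ) := by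
      push_cast
      rw [vecNormSq_coe, vecNormSq_coe, vecNormSq_coe,
        dot_mulVec_mulVec, dot_mulVec_mulVec, hP2, hQ2,
        ← add_dotProduct, ← Matrix.vecMul_add, hPQ1, Matrix.vecMul_one]
    have : vecNormSq (P *ᵥ v) + vecNormSq (Q *ᵥ v) = vecNormSq v := by exact_mod_cast key
    rw [this, hv, hv1]
  set α₁ : Fin N → Option (Fin n) → ℂ :=
    fun l i => (starRingEnd ℂ) (∑ j, (P * U₁) (e l) (i, j) * (U₀ *ᵥ ψ) (i, j)) with hα₁
  set α₂ : Fin N → Option (Fin n) → ℂ :=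
    fun l i => (starRingEnd ℂ) (∑ j, (Q * U₁) (e l) (i, j) * (U₀ *ᵥ ψ) (i, j)) with hα₂
  have hsum₁ : ∀ x : Fin n → Bool,
      ∑ l : Fin N, Complex.normSq (∑ i, (starRingEnd ℂ) (α₁ l i) * fourierVec x i)
        = vecNormSq ((P * U₁ * oracleMat n m x * U₀) *ᵥ ψ) := by
    intro x
    rw [vecNormSq_expand (P * U₁) U₀ ψ x]
    exact Equiv.sum_comp e (fun b => Complex.normSq (∑ i,
      (starRingEnd ℂ) ((starRingEnd ℂ) (∑ j, (P * U₁) b (i, j) * (U₀ *ᵥ ψ) (i, j)))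
        * fourierVec x i))
  have hsum₂ : ∀ x : Fin n → Bool,
      ∑ l : Fin N, Complex.normSq (∑ i, (starRingEnd ℂ) (α₂ l i) * fourierVec x i)
        = vecNormSq ((Q * U₁ * oracleMat n m x * U₀) *ᵥ ψ) := by
    intro x
    rw [vecNormSq_expand (Q * U₁) U₀ ψ x]
    exact Equiv.sum_comp e (fun b => Complex.normSq (∑ i,
      (starRingEnd ℂ) ((starRingEnd ℂ) (∑ j, (Q * U₁) b (i, j) * (U₀ *ᵥ ψ) (i, j)))
        * fourierVec x i))
  refine ⟨N, N, hN, hN, Fin.append α₁ α₂, ⟨?_, ?_, ?_⟩, ?_⟩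
  · intro x hx
    simp only [Fin.append_left]
    rw [hsum₁ x]
    exact hcomp x hx
  · intro x hx
    simp only [Fin.append_right]
    rw [hsum₂ x]
    have h1 := split x
    have h2 := hcomp x hx
    rw [h2] at h1
    by_cases hfx : f x = true
    · rw [if_pos hfx] at h1; rw [if_pos hfx]; linarith
    · rw [if_neg hfx] at h1; rw [if_neg hfx]; linarith
  · intro x
    rw [Fin.sum_univ_add]
    simp only [Fin.append_left, Fin.append_right]
    rw [hsum₁ x, hsum₂ x]
    exact split x
  · intro i j hij
    rw [Fin.sum_univ_add]
    simp only [Fin.append_left, Fin.append_right]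
    -- indicator vectors
    set χ : Option (Fin n) → Option (Fin n) × Fin m → ℂ :=
      fun i b => if b.1 = i then (U₀ *ᵥ ψ) b else 0 with hχdef
    have hχ : ∀ (M : Matrix (Option (Fin n) × Fin m) (Option (Fin n) × Fin m) ℂ)
        (i : Option (Fin n)) (b : Option (Fin n) × Fin m),
        (M *ᵥ χ i) b = ∑ j, M b (i, j) * (U₀ *ᵥ ψ) (i, j) := by
      intro M i b
      rw [mulVec, dotProduct, Fintype.sum_prod_type]
      rw [Finset.sum_eq_single i]
      · refine Finset.sum_congr rfl fun j _ => ?_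
        simp [hχdef]
      · intro k _ hk
        refine Finset.sum_eq_zero fun j _ => ?_
        simp [hχdef, hk]
      · intro hcon; exact absurd (Finset.mem_univ i) hcon
    have hMsum : ∀ (M : Matrix (Option (Fin n) × Fin m) (Option (Fin n) × Fin m) ℂ),
        (∑ l : Fin N,
          (starRingEnd ℂ) ((starRingEnd ℂ) (∑ j', M (e l) (i, j') * (U₀ *ᵥ ψ) (i, j')))
            * (starRingEnd ℂ) (∑ j', M (e l) (j, j') * (U₀ *ᵥ ψ) (j, j')))
          = star (χ j) ᵥ* (Mᴴ * M) ⬝ᵥ χ i := by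
      intro M
      rw [← dot_mulVec_mulVec]
      have : ∀ b, (starRingEnd ℂ) ((starRingEnd ℂ) ((M *ᵥ χ i) b))
          * (starRingEnd ℂ) ((M *ᵥ χ j) b)
          = star (M *ᵥ χ j) b * (M *ᵥ χ i) b := by
        intro b
        simp only [Pi.star_apply, RCLike.star_def, Complex.conj_conj]
        ring
      calc ∑ l : Fin N,
          (starRingEnd ℂ) ((starRingEnd ℂ) (∑ j', M (e l) (i, j') * (U₀ *ᵥ ψ) (i, j')))
            * (starRingEnd ℂ) (∑ j', M (e l) (j, j') * (U₀ *ᵥ ψ) (j, j'))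
          = ∑ l : Fin N, star (M *ᵥ χ j) (e l) * (M *ᵥ χ i) (e l) := by
            refine Finset.sum_congr rfl fun l _ => ?_
            rw [← hχ M i (e l), ← hχ M j (e l)]
            exact this (e l)
        _ = ∑ b, star (M *ᵥ χ j) b * (M *ᵥ χ i) b :=
            Equiv.sum_comp e (fun b => star (M *ᵥ χ j) b * (M *ᵥ χ i) b)
        _ = star (M *ᵥ χ j) ⬝ᵥ (M *ᵥ χ i) := rfl
    rw [hα₁, hα₂]
    simp only []
    rw [hMsum (P * U₁), hMsum (Q * U₁)]
    have hmat : (P * U₁)ᴴ * (P * U₁) + (Q * U₁)ᴴ * (Q * U₁) = 1 := by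
      rw [conjTranspose_mul, conjTranspose_mul,
        Matrix.mul_assoc U₁ᴴ Pᴴ (P * U₁), Matrix.mul_assoc U₁ᴴ Qᴴ (Q * U₁),
        ← Matrix.mul_assoc Pᴴ P U₁, ← Matrix.mul_assoc Qᴴ Q U₁, hP2, hQ2,
        ← Matrix.mul_add, ← Matrix.add_mul, hPQ1, Matrix.one_mul]
      exact Matrix.mem_unitaryGroup_iff'.mp hU₁
    rw [← add_dotProduct, ← Matrix.vecMul_add, hmat, Matrix.vecMul_one]
    refine Finset.sum_eq_zero fun b _ => ?_
    by_cases hb : b.1 = j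
    · have : χ i b = 0 := by
        rw [hχdef]
        simp only
        rw [if_neg]
        rw [hb]
        exact fun hji => hij hji.symm
      rw [this, mul_zero]
    · have : χ j b = 0 := by
        rw [hχdef]; simp only; rw [if_neg hb]
      simp [this]

end Stmt7Aux

namespace Stmt7Aux
open Matrix
open scoped InnerProductSpace

lemma backward {n : ℕ} (D : Set (Fin n → Bool)) (f : (Fin n → Bool) → Bool)
    {p q : ℕ} (hp : 1 ≤ p) (hq : 1 ≤ q) (α : Fin (p + q) → Option (Fin n) → ℂ)
    (hrep : SOSRep D f p q α)
    (horth : ∀ i j : Option (Fin n), i ≠ j →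
      ∑ l : Fin (p + q), (starRingEnd ℂ) (α l i) * α l j = 0) :
    ComputedExactly1 D f := by
  classical
  obtain ⟨hrep1, hrep2, hrep3⟩ := hrep
  set A : Option (Fin n) → Option (Fin n) → ℂ :=
    fun i j => ∑ l, α l i * (starRingEnd ℂ) (α l j) with hA
  have hA0 : ∀ i j, i ≠ j → A i j = 0 := by
    intro i j hij
    have h := horth i j hij
    have h2 : A i j = (starRingEnd ℂ) (∑ l : Fin (p + q), (starRingEnd ℂ) (α l i) * α l j) := by
      rw [map_sum]
      refine Finset.sum_congr rfl fun l _ => ?_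
      rw [_root_.map_mul, Complex.conj_conj]
    rw [h2, h, map_zero]
  have hAdiag : ∀ i, A i i = ∑ l : Fin (p + q), (Complex.normSq (α l i) : ℂ) := by
    intro i
    refine Finset.sum_congr rfl fun l _ => ?_
    rw [Complex.mul_conj]
  -- Step 1 : total mass one
  have key1 : ∑ i : Option (Fin n), ∑ l : Fin (p + q), Complex.normSq (α l i) = 1 := by
    set x : Fin n → Bool := fun _ => false with hx
    have h3 := hrep3 x
    have hC : ((∑ l : Fin (p + q),
        Complex.normSq (∑ i, (starRingEnd ℂ) (α l i) * fourierVec x i) : ℝ) : ℂ)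
        = ∑ i : Option (Fin n), ∑ l : Fin (p + q), (Complex.normSq (α l i) : ℂ) := by
      push_cast
      calc ∑ l : Fin (p + q),
            ((Complex.normSq (∑ i, (starRingEnd ℂ) (α l i) * fourierVec x i) : ℝ) : ℂ)
          = ∑ l : Fin (p + q),
              (starRingEnd ℂ) (∑ i, (starRingEnd ℂ) (α l i) * fourierVec x i)
                * (∑ i, (starRingEnd ℂ) (α l i) * fourierVec x i) := by
            refine Finset.sum_congr rfl fun l _ => ?_
            rw [Complex.normSq_eq_conj_mul_self]
        _ = ∑ l : Fin (p + q), ∑ i, ∑ i',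
              (α l i * (starRingEnd ℂ) (α l i')) * (fourierVec x i * fourierVec x i') := by
            refine Finset.sum_congr rfl fun l _ => ?_
            have hconj : (starRingEnd ℂ) (∑ i, (starRingEnd ℂ) (α l i) * fourierVec x i)
                = ∑ i, α l i * fourierVec x i := by
              rw [map_sum]
              refine Finset.sum_congr rfl fun i _ => ?_
              rw [_root_.map_mul, Complex.conj_conj, fourierVec_conj]
            rw [hconj, Finset.sum_mul_sum]
            refine Finset.sum_congr rfl fun i _ => Finset.sum_congr rfl fun i' _ => ?_
            ring
        _ = ∑ i, ∑ i', ∑ l : Fin (p + q),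
              (α l i * (starRingEnd ℂ) (α l i')) * (fourierVec x i * fourierVec x i') := by
            rw [Finset.sum_comm]
            refine Finset.sum_congr rfl fun i _ => Finset.sum_comm
        _ = ∑ i, ∑ i', (A i i') * (fourierVec x i * fourierVec x i') := by
            refine Finset.sum_congr rfl fun i _ => Finset.sum_congr rfl fun i' _ => ?_
            rw [hA, ← Finset.sum_mul]
        _ = ∑ i : Option (Fin n), ∑ l : Fin (p + q), (Complex.normSq (α l i) : ℂ) := by
            refine Finset.sum_congr rfl fun i _ => ?_
            rw [Finset.sum_eq_single i]
            · rw [hAdiag, fourierVec_sq, mul_one]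
            · intro i' _ hi'
              rw [hA0 i i' (fun h => hi' h.symm), zero_mul]
            · intro hcon; exact absurd (Finset.mem_univ i) hcon
    rw [h3] at hC
    exact_mod_cast hC.symm
  -- the state
  set ψ : Option (Fin n) × Fin (p + q) → ℂ := fun b => (starRingEnd ℂ) (α b.2 b.1) with hψdef
  have hψ : vecNormSq ψ = 1 := by
    unfold vecNormSq
    rw [Fintype.sum_prod_type]
    rw [← key1]
    refine Finset.sum_congr rfl fun i _ => Finset.sum_congr rfl fun l _ => ?_
    rw [hψdef]
    exact Complex.normSq_conj _
  -- vectors in Euclidean space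
  set s : Option (Fin n) → EuclideanSpace ℂ (Option (Fin n) × Fin (p + q)) := fun i =>
    (WithLp.equiv 2 ((Option (Fin n) × Fin (p + q)) → ℂ)).symm
      (fun b => if b.1 = i then (starRingEnd ℂ) (α b.2 i) else 0) with hs
  set t : Option (Fin n) → EuclideanSpace ℂ (Option (Fin n) × Fin (p + q)) := fun i =>
    (WithLp.equiv 2 ((Option (Fin n) × Fin (p + q)) → ℂ)).symm
      (fun b => if b.1 = none then (starRingEnd ℂ) (α b.2 i) else 0) with ht
  have hscoord : ∀ i (b : Option (Fin n) × Fin (p + q)),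
      s i b = if b.1 = i then (starRingEnd ℂ) (α b.2 i) else 0 := fun i b => rfl
  have htcoord : ∀ i (b : Option (Fin n) × Fin (p + q)),
      t i b = if b.1 = none then (starRingEnd ℂ) (α b.2 i) else 0 := fun i b => rfl
  have hinnS : ∀ i j, ⟪s i, s j⟫_ℂ = if i = j then A i i else 0 := by
    intro i j
    rw [euclid_inner]
    by_cases hij : i = j
    · subst hij
      rw [if_pos rfl, Fintype.sum_prod_type]
      rw [Finset.sum_eq_single i]
      · refine Finset.sum_congr rfl fun l _ => ?_
        simp [hscoord]
      · intro k _ hk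
        refine Finset.sum_eq_zero fun l _ => ?_
        simp [hscoord, hk]
      · intro hcon; exact absurd (Finset.mem_univ i) hcon
    · rw [if_neg hij]
      refine Finset.sum_eq_zero fun b _ => ?_
      rw [hscoord, hscoord]
      by_cases hbi : b.1 = i
      · have hnj : ¬ b.1 = j := by rw [hbi]; exact hij
        rw [if_neg hnj, mul_zero]
      · rw [if_neg hbi, map_zero, zero_mul]
  have hinnT : ∀ i j, ⟪t i, t j⟫_ℂ = A i j := by
    intro i j
    rw [euclid_inner, Fintype.sum_prod_type, Fintype.sum_option]
    have hz : ∀ k : Fin n, ∑ l, (starRingEnd ℂ) (t i (some k, l)) * t j (some k, l) = 0 := by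
      intro k
      refine Finset.sum_eq_zero fun l _ => ?_
      simp [htcoord]
    rw [Finset.sum_eq_zero fun k _ => hz k, add_zero]
    refine Finset.sum_congr rfl fun l _ => ?_
    simp [htcoord]
  -- the isometry
  have hg : Function.Injective
      (fun i : Option (Fin n) => ((i, ⟨0, by omega⟩) : Option (Fin n) × Fin (p + q))) := by
    intro a b h
    exact congrArg Prod.fst h
  obtain ⟨L, hL⟩ := exists_isometryEquiv _ hg s t
    (fun i j hij => by rw [hinnS, if_neg hij])
    (fun i j => by
      rw [hinnS, hinnT]
      by_cases hij : i = j
      · subst hij; rw [if_pos rfl]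
      · rw [if_neg hij, hA0 i j hij])
  obtain ⟨U₁, hU₁mem, hU₁v⟩ := exists_unitary_matrix L
  -- the projection
  set P : Matrix (Option (Fin n) × Fin (p + q)) (Option (Fin n) × Fin (p + q)) ℂ :=
    Matrix.diagonal (fun b => if b.1 = none ∧ (b.2 : ℕ) < p then 1 else 0) with hP
  have hPherm : P.IsHermitian := by
    show Pᴴ = P
    rw [hP, Matrix.diagonal_conjTranspose]
    ext a b
    rw [Matrix.diagonal_apply, Matrix.diagonal_apply]
    by_cases hab : a = b
    · rw [if_pos hab, if_pos hab, Pi.star_apply]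
      split <;> simp
    · rw [if_neg hab, if_neg hab]
  have hPP : P * P = P := by
    rw [hP, Matrix.diagonal_mul_diagonal]
    ext a b
    rw [Matrix.diagonal_apply, Matrix.diagonal_apply]
    by_cases hab : a = b
    · rw [if_pos hab, if_pos hab]
      split <;> simp
    · rw [if_neg hab, if_neg hab]
  refine ⟨p + q, by omega, ψ, hψ, 1, U₁, P, Submonoid.one_mem _, hU₁mem, hPherm, hPP, ?_⟩
  intro x hx
  -- simplify the state evolution
  have hmul : (P * U₁ * oracleMat n (p + q) x * 1) *ᵥ ψ
      = P *ᵥ (U₁ *ᵥ (oracleMat n (p + q) x *ᵥ ψ)) := by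
    rw [Matrix.mul_one, ← mulVec_mulVec, ← mulVec_mulVec]
  rw [hmul]
  -- coordinate formula for sums in EuclideanSpace
  have hR : ∀ (c : Option (Fin n) → ℂ) (v : Option (Fin n) → EuclideanSpace ℂ
        (Option (Fin n) × Fin (p + q))) (b : Option (Fin n) × Fin (p + q)),
      (WithLp.equiv 2 ((Option (Fin n) × Fin (p + q)) → ℂ)) (∑ i, c i • v i) b
        = ∑ i, c i * (v i b) := by
    intro c v b
    have h1 : (WithLp.linearEquiv 2 ℂ ((Option (Fin n) × Fin (p + q)) → ℂ)) (∑ i, c i • v i)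
        = ∑ i, c i • (WithLp.linearEquiv 2 ℂ ((Option (Fin n) × Fin (p + q)) → ℂ)) (v i) := by
      rw [map_sum]
      exact Finset.sum_congr rfl fun i _ => by rw [_root_.map_smul]
    have h2 := congrFun h1 b
    rw [Finset.sum_apply] at h2
    exact h2
  -- the state after the oracle
  have hsymm : (WithLp.equiv 2 ((Option (Fin n) × Fin (p + q)) → ℂ)).symm
      (oracleMat n (p + q) x *ᵥ ψ) = ∑ i, fourierVec x i • s i := by
    rw [Equiv.symm_apply_eq]
    funext b
    rw [hR]
    have hl : (oracleMat n (p + q) x *ᵥ ψ) b = fourierVec x b.1 * ψ b := by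
      rw [oracleMat_eq, mulVec_diagonal]
    rw [hl]
    rw [Finset.sum_eq_single b.1]
    · rw [hscoord, if_pos rfl, hψdef]
    · intro i _ hi
      rw [hscoord, if_neg (fun h => hi h.symm), mul_zero]
    · intro hcon; exact absurd (Finset.mem_univ b.1) hcon
  have hstate : U₁ *ᵥ (oracleMat n (p + q) x *ᵥ ψ)
      = (WithLp.equiv 2 ((Option (Fin n) × Fin (p + q)) → ℂ)) (∑ i, fourierVec x i • t i) := by
    rw [hU₁v, hsymm]
    congr 1
    rw [map_sum]
    refine Finset.sum_congr rfl fun i _ => ?_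
    rw [LinearIsometryEquiv.map_smul, hL]
  rw [hstate]
  -- final norm computation
  have hg2 : ∀ b : Option (Fin n) × Fin (p + q),
      (WithLp.equiv 2 ((Option (Fin n) × Fin (p + q)) → ℂ)) (∑ i, fourierVec x i • t i) b
        = if b.1 = none then ∑ i, fourierVec x i * (starRingEnd ℂ) (α b.2 i) else 0 := by
    intro b
    rw [hR]
    by_cases hb : b.1 = none
    · rw [if_pos hb]
      refine Finset.sum_congr rfl fun i _ => ?_
      rw [htcoord, if_pos hb]
    · rw [if_neg hb]
      refine Finset.sum_eq_zero fun i _ => ?_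
      rw [htcoord, if_neg hb, mul_zero]
  have hPg : ∀ b : Option (Fin n) × Fin (p + q),
      (P *ᵥ ((WithLp.equiv 2 ((Option (Fin n) × Fin (p + q)) → ℂ))
          (∑ i, fourierVec x i • t i))) b
        = if b.1 = none ∧ (b.2 : ℕ) < p
            then ∑ i, fourierVec x i * (starRingEnd ℂ) (α b.2 i) else 0 := by
    intro b
    rw [hP, mulVec_diagonal, hg2]
    by_cases hb : b.1 = none ∧ (b.2 : ℕ) < p
    · rw [if_pos hb, if_pos hb, if_pos hb.1, one_mul]
    · rw [if_neg hb, zero_mul, if_neg hb]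
  unfold vecNormSq
  rw [Finset.sum_congr rfl fun b _ => by rw [hPg b]]
  rw [Fintype.sum_prod_type, Fintype.sum_option]
  have hsome : ∀ k : Fin n, ∑ l : Fin (p + q),
      Complex.normSq (if (some k, l).1 = none ∧ ((some k, l).2 : ℕ) < p
        then ∑ i, fourierVec x i * (starRingEnd ℂ) (α l i) else 0) = 0 := by
    intro k
    refine Finset.sum_eq_zero fun l _ => ?_
    rw [if_neg (by simp)]
    simp
  rw [Finset.sum_eq_zero fun k _ => hsome k, add_zero]
  have hnone : ∀ l : Fin (p + q),
      Complex.normSq (if ((none : Option (Fin n)), l).1 = none ∧ ((l : Fin (p+q)) : ℕ) < p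
        then ∑ i, fourierVec x i * (starRingEnd ℂ) (α l i) else 0)
      = if (l : ℕ) < p then Complex.normSq (∑ i, fourierVec x i * (starRingEnd ℂ) (α l i))
          else 0 := by
    intro l
    by_cases hl : (l : ℕ) < p
    · rw [if_pos ⟨rfl, hl⟩, if_pos hl]
    · rw [if_neg (fun h => hl h.2), if_neg hl]
      simp
  rw [Finset.sum_congr rfl fun l _ => hnone l]
  rw [Fin.sum_univ_add]
  have hcast : ∀ l : Fin p, (if ((Fin.castAdd q l : Fin (p + q)) : ℕ) < p
      then Complex.normSq (∑ i, fourierVec x i * (starRingEnd ℂ) (α (Fin.castAdd q l) i))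
      else 0)
      = Complex.normSq (∑ i, (starRingEnd ℂ) (α (Fin.castAdd q l) i) * fourierVec x i) := by
    intro l
    rw [if_pos (by simp [Fin.coe_castAdd, l.isLt])]
    congr 1
    exact Finset.sum_congr rfl fun i _ => mul_comm _ _
  have hnat : ∀ l : Fin q, (if ((Fin.natAdd p l : Fin (p + q)) : ℕ) < p
      then Complex.normSq (∑ i, fourierVec x i * (starRingEnd ℂ) (α (Fin.natAdd p l) i))
      else 0) = 0 := by
    intro l
    rw [if_neg (by simp [Fin.coe_natAdd])]
  rw [Finset.sum_congr rfl fun l _ => hcast l, Finset.sum_congr rfl fun l _ => hnat l,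
    Finset.sum_const_zero, add_zero]
  exact hrep1 x hx

end Stmt7Aux

theorem stmt_7 (n : ℕ) (D : Set (Fin n → Bool)) (f : (Fin n → Bool) → Bool)
    (hnc : (∃ x ∈ D, f x = false) ∧ (∃ y ∈ D, f y = true)) :
    ComputedExactly1 D f ↔
      ∃ p q : ℕ, 1 ≤ p ∧ 1 ≤ q ∧ ∃ α : Fin (p + q) → Option (Fin n) → ℂ,
        SOSRep D f p q α ∧
        ∀ i j : Option (Fin n), i ≠ j →
          ∑ l : Fin (p + q), (starRingEnd ℂ) (α l i) * α l j = 0 := by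
  constructor
  · exact Stmt7Aux.forward D f
  · rintro ⟨p, q, hp, hq, α, hrep, horth⟩
    exact Stmt7Aux.backward D f hp hq α hrep horth
end

section
/- Let f : D → {0,1} be a non-constant n-bit partial Boolean function that depends on k bits. If f can be computed exactly by a quantum 1-query algorithm, then 1 ≤ rank(G_f(1,0)) ≤ n, 1 ≤ rank(G_f(1,1)) ≤ n, and rank(G_f(1,0)) + rank(G_f(1,1)) ≤ 2n + 2 − k. -/
open scoped BigOperators

noncomputable section
open Matrix

namespace QAux

lemma vecNormSq_eq_re {ι : Type*} [Fintype ι] (z : ι → ℂ) :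
    vecNormSq z = (star z ⬝ᵥ z).re := by
  unfold vecNormSq
  rw [dotProduct, Complex.re_sum]
  apply Finset.sum_congr rfl
  intro i _
  simp [Complex.normSq_apply, Complex.mul_re]

lemma dot_conj_trans {ι : Type*} [Fintype ι] (M N : Matrix ι ι ℂ) (y : ι → ℂ) :
    star (M *ᵥ y) ⬝ᵥ (N *ᵥ y) = star y ⬝ᵥ ((Mᴴ * N) *ᵥ y) := by
  rw [Matrix.star_mulVec, Matrix.dotProduct_mulVec, Matrix.dotProduct_mulVec,
    Matrix.vecMul_vecMul]

lemma vecNormSq_unitary {ι : Type*} [Fintype ι] [DecidableEq ι]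
    {U : Matrix ι ι ℂ} (hU : U ∈ Matrix.unitaryGroup ι ℂ) (z : ι → ℂ) :
    vecNormSq (U *ᵥ z) = vecNormSq z := by
  rw [vecNormSq_eq_re, vecNormSq_eq_re, dot_conj_trans]
  have h1 : Uᴴ * U = 1 := by
    have := hU.1
    rwa [Matrix.star_eq_conjTranspose] at this
  rw [h1, Matrix.one_mulVec]

lemma vecNormSq_proj_split {ι : Type*} [Fintype ι] [DecidableEq ι]
    {P : Matrix ι ι ℂ} (hP : P.IsHermitian) (hP2 : P * P = P) (y : ι → ℂ) :
    vecNormSq (P *ᵥ y) + vecNormSq ((1 - P) *ᵥ y) = vecNormSq y := by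
  have h12 : star (P *ᵥ y) ⬝ᵥ ((1 - P) *ᵥ y) = 0 := by
    rw [dot_conj_trans]
    have : Pᴴ * (1 - P) = 0 := by
      rw [hP.eq, Matrix.mul_sub, Matrix.mul_one, hP2, sub_self]
    rw [this, Matrix.zero_mulVec, dotProduct_zero]
  have h21 : star ((1 - P) *ᵥ y) ⬝ᵥ (P *ᵥ y) = 0 := by
    rw [dot_conj_trans]
    have : (1 - P)ᴴ * P = 0 := by
      rw [Matrix.conjTranspose_sub, Matrix.conjTranspose_one, hP.eq,
        Matrix.sub_mul, Matrix.one_mul, hP2, sub_self]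
    rw [this, Matrix.zero_mulVec, dotProduct_zero]
  have hy : P *ᵥ y + (1 - P) *ᵥ y = y := by
    rw [Matrix.sub_mulVec, Matrix.one_mulVec]
    abel
  have key : star y ⬝ᵥ y
      = star (P *ᵥ y) ⬝ᵥ (P *ᵥ y) + star ((1 - P) *ᵥ y) ⬝ᵥ ((1 - P) *ᵥ y) := by
    conv_lhs => rw [← hy]
    rw [star_add, add_dotProduct, dotProduct_add, dotProduct_add,
      h12, h21]
    ring
  rw [vecNormSq_eq_re, vecNormSq_eq_re, vecNormSq_eq_re, key, Complex.add_re]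


variable {n : ℕ}

def Xo (o : Option (Fin n)) : MvPolynomial (Fin n) ℝ := o.elim 1 MvPolynomial.X

def Pa (a : Option (Fin n) → ℝ) : MvPolynomial (Fin n) ℝ :=
  ∑ o : Option (Fin n), ∑ o' : Option (Fin n),
    MvPolynomial.C (a o * a o') * (if o = o' then Xo o else Xo o * Xo o')

lemma eval_Xo (x : Fin n → Bool) (o : Option (Fin n)) :
    MvPolynomial.eval (fun i => if x i then (1:ℝ) else 0) (Xo o) = polyVec x o := by
  cases o <;> simp [Xo, polyVec]

lemma polyVec_sq (x : Fin n → Bool) (o : Option (Fin n)) :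
    polyVec x o * polyVec x o = polyVec x o := by
  cases o with
  | none => simp [polyVec]
  | some t => by_cases h : x t <;> simp [polyVec, h]

lemma eval_Pa (a : Option (Fin n) → ℝ) (x : Fin n → Bool) :
    MvPolynomial.eval (fun i => if x i then (1:ℝ) else 0) (Pa a) = (a ⬝ᵥ polyVec x)^2 := by
  have hterm : ∀ o o' : Option (Fin n),
      MvPolynomial.eval (fun i => if x i then (1:ℝ) else 0)
        (if o = o' then Xo o else Xo o * Xo o') = polyVec x o * polyVec x o' := by
    intro o o'
    split
    · next h => subst h; rw [eval_Xo, polyVec_sq]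
    · rw [MvPolynomial.eval_mul, eval_Xo, eval_Xo]
  rw [sq]
  simp only [Pa, MvPolynomial.eval_sum, MvPolynomial.eval_mul, MvPolynomial.eval_C, hterm,
    dotProduct]
  rw [Finset.sum_mul_sum]
  apply Finset.sum_congr rfl; intro o _
  apply Finset.sum_congr rfl; intro o' _
  ring


lemma degreeOf_Xo_le (i : Fin n) (o : Option (Fin n)) :
    MvPolynomial.degreeOf i (Xo o) ≤ 1 := by
  cases o with
  | none =>
    rw [Xo, Option.elim, ← MvPolynomial.C_1, MvPolynomial.degreeOf_C]; exact zero_le_one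
  | some t => rw [Xo, Option.elim, MvPolynomial.degreeOf_X]; split <;> simp

lemma degreeOf_Xo_eq_zero (i : Fin n) (o : Option (Fin n)) (h : o ≠ some i) :
    MvPolynomial.degreeOf i (Xo o) = 0 := by
  cases o with
  | none => rw [Xo, Option.elim, ← MvPolynomial.C_1, MvPolynomial.degreeOf_C]
  | some t =>
    rw [Xo, Option.elim, MvPolynomial.degreeOf_X, if_neg]
    intro hit; exact h (by rw [hit])

lemma degreeOf_Pa_le (a : Option (Fin n) → ℝ) (i : Fin n) :
    MvPolynomial.degreeOf i (Pa a) ≤ 1 := by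
  unfold Pa
  apply Finset.sum_induction _ (fun p => MvPolynomial.degreeOf i p ≤ 1)
  · intro p q hp hq
    exact le_trans (MvPolynomial.degreeOf_add_le _ _ _) (max_le hp hq)
  · simp [MvPolynomial.degreeOf_zero]
  intro o _
  apply Finset.sum_induction _ (fun p => MvPolynomial.degreeOf i p ≤ 1)
  · intro p q hp hq
    exact le_trans (MvPolynomial.degreeOf_add_le _ _ _) (max_le hp hq)
  · simp [MvPolynomial.degreeOf_zero]
  intro o' _
  refine le_trans (MvPolynomial.degreeOf_mul_le _ _ _) ?_
  rw [MvPolynomial.degreeOf_C, zero_add]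
  split
  · exact degreeOf_Xo_le i o
  · refine le_trans (MvPolynomial.degreeOf_mul_le _ _ _) ?_
    rcases eq_or_ne o (some i) with ho | ho
    · next h =>
      have ho' : o' ≠ some i := fun hh => h (by rw [ho, hh])
      rw [degreeOf_Xo_eq_zero i o' ho', add_zero]
      exact degreeOf_Xo_le i o
    · rw [degreeOf_Xo_eq_zero i o ho, zero_add]
      exact degreeOf_Xo_le i o'

lemma vars_Xo (o : Option (Fin n)) (t : Fin n) (h : t ∈ (Xo o).vars) : o = some t := by
  cases o with
  | none => rw [Xo, Option.elim, MvPolynomial.vars_one] at h; simp at h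
  | some u => rw [Xo, Option.elim, MvPolynomial.vars_X] at h; simp at h; rw [h]

lemma vars_Pa {a : Option (Fin n) → ℝ} {t : Fin n} (h : t ∈ (Pa a).vars) :
    a (some t) ≠ 0 := by
  intro ha
  have h1 := MvPolynomial.vars_sum_subset Finset.univ
    (fun o : Option (Fin n) => ∑ o' : Option (Fin n),
      MvPolynomial.C (a o * a o') * (if o = o' then Xo o else Xo o * Xo o')) h
  obtain ⟨o, -, h2⟩ := Finset.mem_biUnion.mp h1
  have h3 := MvPolynomial.vars_sum_subset Finset.univ
    (fun o' : Option (Fin n) =>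
      MvPolynomial.C (a o * a o') * (if o = o' then Xo o else Xo o * Xo o')) h2
  obtain ⟨o', -, h4⟩ := Finset.mem_biUnion.mp h3
  rcases eq_or_ne o (some t) with ho | ho
  · subst ho; simp [ha, MvPolynomial.vars_0] at h4
  rcases eq_or_ne o' (some t) with ho' | ho'
  · subst ho'; simp [ha, MvPolynomial.vars_0] at h4
  have h5 := MvPolynomial.vars_mul _ _ h4
  rw [MvPolynomial.vars_C] at h5
  simp only [Finset.empty_union] at h5
  have : o = some t ∨ o' = some t := by
    split at h5
    · exact Or.inl (vars_Xo o t h5)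
    · rcases Finset.mem_union.mp (MvPolynomial.vars_mul _ _ h5) with h6 | h6
      · exact Or.inl (vars_Xo o t h6)
      · exact Or.inr (vars_Xo o' t h6)
  tauto


def dotL (a : Option (Fin n) → ℝ) : (Option (Fin n) → ℝ) →ₗ[ℝ] ℝ where
  toFun v := a ⬝ᵥ v
  map_add' u v := by simp [dotProduct_add]
  map_smul' c v := by simp [dotProduct_smul]

variable {ι κ : Type} [Fintype ι] [Fintype κ]

/-- The combined bilinear form. -/
def Bf (a0 : ι → Option (Fin n) → ℝ) (a1 : κ → Option (Fin n) → ℝ)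
    (u v : Option (Fin n) → ℝ) : ℝ :=
  (∑ i, (a0 i ⬝ᵥ u) * (a0 i ⬝ᵥ v)) + ∑ j, (a1 j ⬝ᵥ u) * (a1 j ⬝ᵥ v)

lemma Bf_symm (a0 : ι → Option (Fin n) → ℝ) (a1 : κ → Option (Fin n) → ℝ) (u v) :
    Bf a0 a1 u v = Bf a0 a1 v u := by
  unfold Bf; congr 1 <;> · apply Finset.sum_congr rfl; intros; ring

lemma Bf_add_left (a0 : ι → Option (Fin n) → ℝ) (a1 : κ → Option (Fin n) → ℝ) (u u' v) :
    Bf a0 a1 (u + u') v = Bf a0 a1 u v + Bf a0 a1 u' v := by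
  unfold Bf
  simp only [dotProduct_add, add_mul]
  rw [Finset.sum_add_distrib, Finset.sum_add_distrib]; ring

lemma Bf_sum_left (a0 : ι → Option (Fin n) → ℝ) (a1 : κ → Option (Fin n) → ℝ)
    {τ : Type} (s : Finset τ) (g : τ → Option (Fin n) → ℝ) (c : τ → ℝ) (v) :
    Bf a0 a1 (∑ t ∈ s, c t • g t) v = ∑ t ∈ s, c t * Bf a0 a1 (g t) v := by
  classical
  induction s using Finset.induction_on with
  | empty =>
    simp [Bf]
  | insert _ _ hni ih =>
    rw [Finset.sum_insert hni, Bf_add_left, ih, Finset.sum_insert hni]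
    congr 1
    unfold Bf
    simp only [dotProduct_smul, smul_eq_mul, Finset.mul_sum, mul_add]
    congr 1 <;> · apply Finset.sum_congr rfl; intros; ring


def ee (o : Option (Fin n)) : Option (Fin n) → ℝ := Pi.single o 1

lemma polyVec_allFalse : polyVec (fun _ : Fin n => false) = ee none := by
  funext o; cases o <;> simp [polyVec, ee, Pi.single_apply]

lemma polyVec_single (t : Fin n) :
    polyVec (fun s => s = t) = ee none + ee (some t) := by
  funext o; cases o with
  | none => simp [polyVec, ee, Pi.single_apply]
  | some s =>
    by_cases h : s = t <;> simp [polyVec, ee, Pi.single_apply, h]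

lemma polyVec_pair {t t' : Fin n} (h : t ≠ t') :
    polyVec (fun s => s = t ∨ s = t') = ee none + ee (some t) + ee (some t') := by
  funext o; cases o with
  | none => simp [polyVec, ee, Pi.single_apply]
  | some s =>
    by_cases h1 : s = t
    · subst h1; simp [polyVec, ee, Pi.single_apply, h]
    · by_cases h2 : s = t' <;> simp [polyVec, ee, Pi.single_apply, h1, h2, Ne.symm h]

lemma Bf_orth (a0 : ι → Option (Fin n) → ℝ) (a1 : κ → Option (Fin n) → ℝ)
    (hall : ∀ x : Fin n → Bool, Bf a0 a1 (polyVec x) (polyVec x) = 1)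
    {t t' : Fin n} (h : t ≠ t') :
    Bf a0 a1 (ee (some t)) (ee (some t')) = 0 := by
  have h00 := hall (fun _ => false)
  have ht := hall (fun s => s = t)
  have ht' := hall (fun s => s = t')
  have htt' := hall (fun s => s = t ∨ s = t')
  rw [polyVec_allFalse] at h00
  rw [polyVec_single] at ht ht'
  rw [polyVec_pair h] at htt'
  have expand : ∀ u v : Option (Fin n) → ℝ, Bf a0 a1 (u + v) (u + v)
      = Bf a0 a1 u u + 2 * Bf a0 a1 u v + Bf a0 a1 v v := by
    intro u v
    rw [show Bf a0 a1 (u+v) (u+v) = Bf a0 a1 u (u+v) + Bf a0 a1 v (u+v) from Bf_add_left a0 a1 u v (u+v)]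
    rw [Bf_symm a0 a1 u (u+v), Bf_symm a0 a1 v (u+v),
      Bf_add_left a0 a1 u v u, Bf_add_left a0 a1 u v v]
    rw [Bf_symm a0 a1 v u]
    ring
  have e1 : Bf a0 a1 (ee none + ee (some t)) (ee none + ee (some t))
      = Bf a0 a1 (ee none) (ee none) + 2 * Bf a0 a1 (ee none) (ee (some t))
        + Bf a0 a1 (ee (some t)) (ee (some t)) := expand _ _
  have e2 : Bf a0 a1 (ee none + ee (some t')) (ee none + ee (some t'))
      = Bf a0 a1 (ee none) (ee none) + 2 * Bf a0 a1 (ee none) (ee (some t'))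
        + Bf a0 a1 (ee (some t')) (ee (some t')) := expand _ _
  have e3 := expand (ee none + ee (some t)) (ee (some t'))
  have e4 : Bf a0 a1 (ee none + ee (some t)) (ee (some t'))
      = Bf a0 a1 (ee none) (ee (some t')) + Bf a0 a1 (ee (some t)) (ee (some t')) :=
    Bf_add_left a0 a1 _ _ _
  rw [e1] at ht
  rw [e2] at ht'
  rw [e3, e1, e4] at htt'
  linarith



def cRow {n m : ℕ} (A : Matrix (Option (Fin n) × Fin m) (Option (Fin n) × Fin m) ℂ)
    (w : Option (Fin n) × Fin m → ℂ) (r : Option (Fin n) × Fin m) (o : Option (Fin n)) : ℂ :=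
  ∑ j : Fin m, A r (o, j) * w (o, j)

def bOf {n : ℕ} (c : Option (Fin n) → ℂ) : Option (Fin n) → ℂ
  | none => c none + ∑ t, c (some t)
  | some t => -2 * c (some t)

lemma oracle_mulVec {m : ℕ} (x : Fin n → Bool) (w : Option (Fin n) × Fin m → ℂ) :
    (oracleMat n m x) *ᵥ w = fun p => fourierVec x p.1 * w p := by
  funext p
  exact Matrix.mulVec_diagonal _ _ _

lemma row_formula {m : ℕ} (A : Matrix (Option (Fin n) × Fin m) (Option (Fin n) × Fin m) ℂ)
    (w : Option (Fin n) × Fin m → ℂ) (x : Fin n → Bool) (r : Option (Fin n) × Fin m) :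
    (A *ᵥ ((oracleMat n m x) *ᵥ w)) r = ∑ o : Option (Fin n), fourierVec x o * cRow A w r o := by
  rw [oracle_mulVec]
  show (A r) ⬝ᵥ (fun p => fourierVec x p.1 * w p) = _
  rw [dotProduct]
  rw [Fintype.sum_prod_type]
  apply Finset.sum_congr rfl
  intro o _
  rw [cRow, Finset.mul_sum]
  apply Finset.sum_congr rfl
  intro j _
  ring

lemma fourier_to_poly (c : Option (Fin n) → ℂ) (x : Fin n → Bool) :
    ∑ o : Option (Fin n), fourierVec x o * c o
      = ∑ o : Option (Fin n), bOf c o * ((polyVec x o : ℝ) : ℂ) := by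
  rw [Fintype.sum_option, Fintype.sum_option]
  show (1 : ℂ) * c none + _ = (c none + ∑ t, c (some t)) * _ + _
  simp only [polyVec, Complex.ofReal_one, mul_one, one_mul]
  rw [add_assoc]
  congr 1
  rw [← Finset.sum_add_distrib]
  apply Finset.sum_congr rfl
  intro t _
  by_cases hx : x t <;> simp [bOf, fourierVec, hx] <;> ring

lemma normSq_lin (b : Option (Fin n) → ℂ) (x : Fin n → Bool) :
    Complex.normSq (∑ o : Option (Fin n), b o * ((polyVec x o : ℝ) : ℂ))
      = ((fun o => (b o).re) ⬝ᵥ polyVec x)^2 + ((fun o => (b o).im) ⬝ᵥ polyVec x)^2 := by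
  have hre : (∑ o : Option (Fin n), b o * ((polyVec x o : ℝ) : ℂ)).re
      = (fun o => (b o).re) ⬝ᵥ polyVec x := by
    rw [Complex.re_sum, dotProduct]
    apply Finset.sum_congr rfl
    intro o _
    simp [Complex.mul_re]
  have him : (∑ o : Option (Fin n), b o * ((polyVec x o : ℝ) : ℂ)).im
      = (fun o => (b o).im) ⬝ᵥ polyVec x := by
    rw [Complex.im_sum, dotProduct]
    apply Finset.sum_congr rfl
    intro o _
    simp [Complex.mul_im]
  rw [Complex.normSq_apply, hre, him]
  ring

lemma normSq_expand {m : ℕ} (A : Matrix (Option (Fin n) × Fin m) (Option (Fin n) × Fin m) ℂ)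
    (w : Option (Fin n) × Fin m → ℂ) (x : Fin n → Bool) :
    vecNormSq (A *ᵥ ((oracleMat n m x) *ᵥ w))
      = ∑ r : Option (Fin n) × Fin m,
          (((fun o => (bOf (cRow A w r) o).re) ⬝ᵥ polyVec x)^2
            + ((fun o => (bOf (cRow A w r) o).im) ⬝ᵥ polyVec x)^2) := by
  unfold vecNormSq
  apply Finset.sum_congr rfl
  intro r _
  rw [row_formula, fourier_to_poly, normSq_lin]

lemma oracle_norm {m : ℕ} (x : Fin n → Bool) (w : Option (Fin n) × Fin m → ℂ) :
    vecNormSq ((oracleMat n m x) *ᵥ w) = vecNormSq w := by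
  rw [oracle_mulVec]
  unfold vecNormSq
  apply Finset.sum_congr rfl
  intro p _
  rw [Complex.normSq_mul]
  have : Complex.normSq (fourierVec x p.1) = 1 := by
    rcases hp : p.1 with _ | i
    · simp [fourierVec]
    · by_cases hx : x i <;> simp [fourierVec, hx]
  rw [this, one_mul]

end QAux

open QAux

theorem core {n k : ℕ} {D : Set (Fin n → Bool)} {f : (Fin n → Bool) → Bool}
    {ι κ : Type} [Fintype ι] [Fintype κ]
    (a0 : ι → Option (Fin n) → ℝ) (a1 : κ → Option (Fin n) → ℝ)
    (h0 : ∀ x ∈ D, ∑ i, (a0 i ⬝ᵥ polyVec x)^2 = if f x then 1 else 0)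
    (h1 : ∀ x ∈ D, ∑ j, (a1 j ⬝ᵥ polyVec x)^2 = if f x then 0 else 1)
    (hall : ∀ x, (∑ i, (a0 i ⬝ᵥ polyVec x)^2) + (∑ j, (a1 j ⬝ᵥ polyVec x)^2) = 1)
    (hnc : (∃ x ∈ D, f x = false) ∧ (∃ y ∈ D, f y = true))
    (hdep : DependsOnBits D f k) :
    1 ≤ rankG D f false ∧ rankG D f false ≤ n ∧
    1 ≤ rankG D f true ∧ rankG D f true ≤ n ∧
    (rankG D f false : ℤ) + (rankG D f true : ℤ) ≤ 2 * n + 2 - k := by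
  classical
  obtain ⟨⟨x0, hx0D, hx0⟩, ⟨y0, hy0D, hy0⟩⟩ := hnc
  set V0 : Submodule ℝ (Option (Fin n) → ℝ) :=
    Submodule.span ℝ (polyVec '' {x ∈ D | f x = false}) with hV0def
  set V1 : Submodule ℝ (Option (Fin n) → ℝ) :=
    Submodule.span ℝ (polyVec '' {x ∈ D | f x = true}) with hV1def
  have hr0 : rankG D f false = Module.finrank ℝ V0 := rfl
  have hr1 : rankG D f true = Module.finrank ℝ V1 := rfl
  have hE : Module.finrank ℝ (Option (Fin n) → ℝ) = n + 1 := by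
    simp [Module.finrank_pi]
  -- orthogonality of the rows to the spans
  have horth0 : ∀ i, ∀ v ∈ V0, a0 i ⬝ᵥ v = 0 := by
    intro i v hv
    have hker : V0 ≤ LinearMap.ker (dotL (a0 i)) := by
      rw [hV0def, Submodule.span_le]
      rintro _ ⟨x, hx, rfl⟩
      have hsum := h0 x hx.1
      rw [hx.2] at hsum
      simp only [Bool.false_eq_true, if_false] at hsum
      have hz := (Finset.sum_eq_zero_iff_of_nonneg
        (fun j _ => sq_nonneg ((a0 j) ⬝ᵥ polyVec x))).mp hsum i (Finset.mem_univ i)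
      have : a0 i ⬝ᵥ polyVec x = 0 := by
        exact pow_eq_zero_iff (n := 2) (by norm_num) |>.mp hz
      simpa [LinearMap.mem_ker, dotL] using this
    have := hker hv
    simpa [LinearMap.mem_ker, dotL] using this
  have horth1 : ∀ j, ∀ v ∈ V1, a1 j ⬝ᵥ v = 0 := by
    intro j v hv
    have hker : V1 ≤ LinearMap.ker (dotL (a1 j)) := by
      rw [hV1def, Submodule.span_le]
      rintro _ ⟨x, hx, rfl⟩
      have hsum := h1 x hx.1
      rw [hx.2] at hsum
      simp only [if_true] at hsum
      have hz := (Finset.sum_eq_zero_iff_of_nonneg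
        (fun i _ => sq_nonneg ((a1 i) ⬝ᵥ polyVec x))).mp hsum j (Finset.mem_univ j)
      have : a1 j ⬝ᵥ polyVec x = 0 := by
        exact pow_eq_zero_iff (n := 2) (by norm_num) |>.mp hz
      simpa [LinearMap.mem_ker, dotL] using this
    have := hker hv
    simpa [LinearMap.mem_ker, dotL] using this
  -- lower bounds
  have hlow : ∀ b : Bool, (∃ x ∈ D, f x = b) →
      1 ≤ Module.finrank ℝ (Submodule.span ℝ (polyVec '' {x ∈ D | f x = b})) := by
    rintro b ⟨x, hxD, hxb⟩
    have hmem : polyVec x ∈ Submodule.span ℝ (polyVec '' {x ∈ D | f x = b}) :=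
      Submodule.subset_span ⟨x, ⟨hxD, hxb⟩, rfl⟩
    by_contra hcon
    have h0' : Module.finrank ℝ (Submodule.span ℝ (polyVec '' {x ∈ D | f x = b})) = 0 := by
      omega
    rw [Submodule.finrank_eq_zero] at h0'
    rw [h0'] at hmem
    have := Submodule.mem_bot (R := ℝ) |>.mp hmem
    have h1' := congrFun this none
    simp [polyVec] at h1'
  -- upper bounds
  have hup0 : Module.finrank ℝ V0 ≤ n := by
    by_contra hgt
    push_neg at hgt
    have hle : Module.finrank ℝ V0 ≤ n + 1 := by
      rw [← hE]; exact Submodule.finrank_le V0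
    have htop : V0 = ⊤ := Submodule.eq_top_of_finrank_eq (by omega : Module.finrank ℝ V0 = Module.finrank ℝ (Option (Fin n) → ℝ)) 
    have hsum := h0 y0 hy0D
    rw [hy0] at hsum
    simp only [if_true] at hsum
    rw [Finset.sum_eq_zero (fun i _ => by
      rw [horth0 i (polyVec y0) (htop ▸ Submodule.mem_top)]; ring)] at hsum
    norm_num at hsum
  have hup1 : Module.finrank ℝ V1 ≤ n := by
    by_contra hgt
    push_neg at hgt
    have hle : Module.finrank ℝ V1 ≤ n + 1 := by
      rw [← hE]; exact Submodule.finrank_le V1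
    have htop : V1 = ⊤ := Submodule.eq_top_of_finrank_eq (by omega : Module.finrank ℝ V1 = Module.finrank ℝ (Option (Fin n) → ℝ))
    have hsum := h1 x0 hx0D
    rw [hx0] at hsum
    simp only [Bool.false_eq_true, if_false] at hsum
    rw [Finset.sum_eq_zero (fun j _ => by
      rw [horth1 j (polyVec x0) (htop ▸ Submodule.mem_top)]; ring)] at hsum
    norm_num at hsum
  refine ⟨hlow false ⟨x0, hx0D, hx0⟩, hup0, hlow true ⟨y0, hy0D, hy0⟩, hup1, ?_⟩
  -- main inequality
  set p : MvPolynomial (Fin n) ℝ := ∑ i : ι, Pa (a0 i) with hpdef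
  have hml : IsMultilinear p := by
    intro t
    rw [hpdef]
    apply Finset.sum_induction _ (fun q => MvPolynomial.degreeOf t q ≤ 1)
    · intro q r hq hr
      exact le_trans (MvPolynomial.degreeOf_add_le _ _ _) (max_le hq hr)
    · simp [MvPolynomial.degreeOf_zero]
    · intro i _
      exact degreeOf_Pa_le (a0 i) t
  have hrep : Represents p D f := by
    intro x hxD
    rw [hpdef, MvPolynomial.eval_sum]
    simp only [eval_Pa]
    exact h0 x hxD
  have hk : k ≤ p.vars.card := hdep.2 ⟨p, hml, hrep, rfl⟩
  have hBall : ∀ x, Bf a0 a1 (polyVec x) (polyVec x) = 1 := by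
    intro x
    have := hall x
    simpa [Bf, pow_two] using this
  -- linear independence
  set Φ : (Option (Fin n) → ℝ) →ₗ[ℝ]
      (((Option (Fin n) → ℝ) ⧸ V0) × ((Option (Fin n) → ℝ) ⧸ V1)) :=
    LinearMap.prod V0.mkQ V1.mkQ with hΦdef
  have hind : LinearIndependent ℝ (fun t : ↥p.vars => Φ (ee (some (t : Fin n)))) := by
    rw [Fintype.linearIndependent_iff]
    intro g hg t
    by_contra hgt
    set u : Option (Fin n) → ℝ := ∑ s : ↥p.vars, g s • ee (some (s : Fin n)) with hudef
    have hΦu : Φ u = 0 := by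
      rw [hudef, map_sum]
      simpa using hg
    have hu0 : u ∈ V0 := by
      have := congrArg Prod.fst hΦu
      simp only [hΦdef, LinearMap.prod_apply, Pi.prod] at this
      exact (Submodule.Quotient.mk_eq_zero V0).mp this
    have hu1 : u ∈ V1 := by
      have := congrArg Prod.snd hΦu
      simp only [hΦdef, LinearMap.prod_apply, Pi.prod] at this
      exact (Submodule.Quotient.mk_eq_zero V1).mp this
    have hBu : Bf a0 a1 u (ee (some (t : Fin n))) = 0 := by
      unfold Bf
      rw [Finset.sum_eq_zero (fun i _ => by rw [horth0 i u hu0, zero_mul]),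
        Finset.sum_eq_zero (fun j _ => by rw [horth1 j u hu1, zero_mul]), add_zero]
    have hBu2 : Bf a0 a1 u (ee (some (t : Fin n)))
        = g t * Bf a0 a1 (ee (some (t : Fin n))) (ee (some (t : Fin n))) := by
      rw [hudef, Bf_sum_left]
      rw [Finset.sum_eq_single t]
      · intro s _ hst
        have : (s : Fin n) ≠ (t : Fin n) := fun hh => hst (Subtype.ext hh)
        rw [Bf_orth a0 a1 hBall this, mul_zero]
      · intro h; exact absurd (Finset.mem_univ t) h
    have hqt : Bf a0 a1 (ee (some (t : Fin n))) (ee (some (t : Fin n))) = 0 := by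
      rw [hBu2] at hBu
      rcases mul_eq_zero.mp hBu with h | h
      · exact absurd h hgt
      · exact h
    have hsq : (∑ i, (a0 i ⬝ᵥ ee (some (t : Fin n)))^2)
        + (∑ j, (a1 j ⬝ᵥ ee (some (t : Fin n)))^2) = 0 := by
      have := hqt
      unfold Bf at this
      simpa [pow_two] using this
    have hs0 : ∀ i, a0 i ⬝ᵥ ee (some (t : Fin n)) = 0 := by
      have hn1 : (0:ℝ) ≤ ∑ i, (a0 i ⬝ᵥ ee (some (t : Fin n)))^2 :=
        Finset.sum_nonneg fun i _ => sq_nonneg _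
      have hn2 : (0:ℝ) ≤ ∑ j, (a1 j ⬝ᵥ ee (some (t : Fin n)))^2 :=
        Finset.sum_nonneg fun j _ => sq_nonneg _
      have h1' : ∑ i, (a0 i ⬝ᵥ ee (some (t : Fin n)))^2 = 0 := by linarith
      intro i
      exact pow_eq_zero_iff (n := 2) (by norm_num) |>.mp
        ((Finset.sum_eq_zero_iff_of_nonneg (fun i _ => sq_nonneg _)).mp h1' i (Finset.mem_univ i))
    -- t is a variable of p, so some a0 i has a0 i (some t) ≠ 0
    have ht := t.2
    have hsub := MvPolynomial.vars_sum_subset (Finset.univ) (fun i : ι => Pa (a0 i)) ht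
    obtain ⟨i, -, hti⟩ := Finset.mem_biUnion.mp hsub
    apply vars_Pa hti
    have := hs0 i
    rwa [show (a0 i ⬝ᵥ ee (some (t : Fin n))) = a0 i (some (t : Fin n)) by
      simp [ee, dotProduct_single]] at this
  have hcard : p.vars.card ≤ Module.finrank ℝ
      ((((Option (Fin n) → ℝ) ⧸ V0) × ((Option (Fin n) → ℝ) ⧸ V1))) := by
    have := hind.fintype_card_le_finrank
    simpa [Fintype.card_coe] using this
  have hfr : Module.finrank ℝ ((((Option (Fin n) → ℝ) ⧸ V0) × ((Option (Fin n) → ℝ) ⧸ V1)))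
      = Module.finrank ℝ ((Option (Fin n) → ℝ) ⧸ V0)
        + Module.finrank ℝ ((Option (Fin n) → ℝ) ⧸ V1) := Module.finrank_prod
  have hq0 : Module.finrank ℝ ((Option (Fin n) → ℝ) ⧸ V0) + Module.finrank ℝ V0 = n + 1 := by
    rw [Submodule.finrank_quotient_add_finrank V0, hE]
  have hq1 : Module.finrank ℝ ((Option (Fin n) → ℝ) ⧸ V1) + Module.finrank ℝ V1 = n + 1 := by
    rw [Submodule.finrank_quotient_add_finrank V1, hE]
  rw [hr0, hr1]
  rw [hfr] at hcard
  omega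

end

open QAux Matrix

theorem stmt_8 (n k : ℕ) (D : Set (Fin n → Bool)) (f : (Fin n → Bool) → Bool)
    (hnc : (∃ x ∈ D, f x = false) ∧ (∃ y ∈ D, f y = true))
    (hdep : DependsOnBits D f k)
    (h : ComputedExactly1 D f) :
    1 ≤ rankG D f false ∧ rankG D f false ≤ n ∧
    1 ≤ rankG D f true ∧ rankG D f true ≤ n ∧
    (rankG D f false : ℤ) + (rankG D f true : ℤ) ≤ 2 * n + 2 - k := by
  classical
  obtain ⟨m, hm, ψ, hψ, U₀, U₁, P, hU₀, hU₁, hP, hP2, hPred⟩ := h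
  set w : Option (Fin n) × Fin m → ℂ := U₀ *ᵥ ψ with hwdef
  have hwnorm : vecNormSq w = 1 := by
    rw [hwdef, vecNormSq_unitary hU₀, hψ]
  set A : Matrix (Option (Fin n) × Fin m) (Option (Fin n) × Fin m) ℂ := P * U₁ with hAdef
  set B : Matrix (Option (Fin n) × Fin m) (Option (Fin n) × Fin m) ℂ := (1 - P) * U₁ with hBdef
  have hA : ∀ x : Fin n → Bool,
      (P * U₁ * oracleMat n m x * U₀) *ᵥ ψ = A *ᵥ ((oracleMat n m x) *ᵥ w) := by
    intro x
    rw [hAdef, hwdef]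
    simp only [Matrix.mulVec_mulVec, Matrix.mul_assoc]
  -- the two real families
  set a0 : ((Option (Fin n) × Fin m) × Bool) → (Option (Fin n) → ℝ) :=
    fun rb o => if rb.2 then (bOf (cRow A w rb.1) o).im else (bOf (cRow A w rb.1) o).re
    with ha0def
  set a1 : ((Option (Fin n) × Fin m) × Bool) → (Option (Fin n) → ℝ) :=
    fun rb o => if rb.2 then (bOf (cRow B w rb.1) o).im else (bOf (cRow B w rb.1) o).re
    with ha1def
  have hsum0 : ∀ x : Fin n → Bool,
      ∑ rb : (Option (Fin n) × Fin m) × Bool, (a0 rb ⬝ᵥ polyVec x)^2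
        = vecNormSq (A *ᵥ ((oracleMat n m x) *ᵥ w)) := by
    intro x
    rw [normSq_expand, Fintype.sum_prod_type]
    apply Finset.sum_congr rfl
    intro r _
    rw [Fintype.sum_bool]
    simp only [ha0def, if_true, Bool.false_eq_true, if_false]
    ring
  have hsum1 : ∀ x : Fin n → Bool,
      ∑ rb : (Option (Fin n) × Fin m) × Bool, (a1 rb ⬝ᵥ polyVec x)^2
        = vecNormSq (B *ᵥ ((oracleMat n m x) *ᵥ w)) := by
    intro x
    rw [normSq_expand, Fintype.sum_prod_type]
    apply Finset.sum_congr rfl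
    intro r _
    rw [Fintype.sum_bool]
    simp only [ha1def, if_true, Bool.false_eq_true, if_false]
    ring
  have hall : ∀ x : Fin n → Bool,
      (∑ rb : (Option (Fin n) × Fin m) × Bool, (a0 rb ⬝ᵥ polyVec x)^2)
        + (∑ rb : (Option (Fin n) × Fin m) × Bool, (a1 rb ⬝ᵥ polyVec x)^2) = 1 := by
    intro x
    rw [hsum0, hsum1]
    have h1 : A *ᵥ ((oracleMat n m x) *ᵥ w) = P *ᵥ (U₁ *ᵥ ((oracleMat n m x) *ᵥ w)) := by
      rw [hAdef]
      simp only [Matrix.mulVec_mulVec, Matrix.mul_assoc]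
    have h2 : B *ᵥ ((oracleMat n m x) *ᵥ w)
        = (1 - P) *ᵥ (U₁ *ᵥ ((oracleMat n m x) *ᵥ w)) := by
      rw [hBdef]
      simp only [Matrix.mulVec_mulVec, Matrix.mul_assoc]
    rw [h1, h2, vecNormSq_proj_split hP hP2, vecNormSq_unitary hU₁, oracle_norm, hwnorm]
  have h0 : ∀ x ∈ D, ∑ rb : (Option (Fin n) × Fin m) × Bool, (a0 rb ⬝ᵥ polyVec x)^2
      = if f x then 1 else 0 := by
    intro x hx
    rw [hsum0, ← hA x]
    exact hPred x hx
  have h1 : ∀ x ∈ D, ∑ rb : (Option (Fin n) × Fin m) × Bool, (a1 rb ⬝ᵥ polyVec x)^2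
      = if f x then 0 else 1 := by
    intro x hx
    have := hall x
    rw [h0 x hx] at this
    by_cases hfx : f x <;> simp [hfx] at this ⊢ <;> linarith
  exact core a0 a1 h0 h1 hall hnc hdep
end

section
/- Let f : D → {0,1} be an n-bit partial Boolean function that depends on k bits, and suppose there exist vectors α¹, …, α^p ∈ ℂ^{n+1} such that f(x) = Σ_{l=1}^{p} |⟨α^l, F(x)₁⟩|² for all x ∈ D. Then there are at least k indices i ∈ {1,…,n} for which the column vector (α¹_i, …, α^p_i) ∈ ℂ^{p} is nonzero. -/
open scoped BigOperators

noncomputable section AuxStmt9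

open MvPolynomial

/-- Auxiliary polynomial: `1` or `1 - 2 X i`. -/
def gpoly {n : ℕ} (o : Option (Fin n)) : MvPolynomial (Fin n) ℝ :=
  match o with
  | none => 1
  | some i => 1 - 2 * X i

/-- Real fourier coordinate. -/
def frv {n : ℕ} (x : Fin n → Bool) (o : Option (Fin n)) : ℝ :=
  match o with
  | none => 1
  | some i => if x i then -1 else 1

lemma fourierVec_eq_frv {n : ℕ} (x : Fin n → Bool) (o : Option (Fin n)) :
    fourierVec x o = ((frv x o : ℝ) : ℂ) := by
  cases o with
  | none => simp [fourierVec, frv]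
  | some i => by_cases h : x i <;> simp [fourierVec, frv, h]

lemma frv_sq {n : ℕ} (x : Fin n → Bool) (o : Option (Fin n)) :
    frv x o * frv x o = 1 := by
  cases o with
  | none => simp [frv]
  | some i => by_cases h : x i <;> simp [frv, h]

lemma eval_gpoly {n : ℕ} (x : Fin n → Bool) (o : Option (Fin n)) :
    MvPolynomial.eval (fun i => if x i then (1 : ℝ) else 0) (gpoly o) = frv x o := by
  cases o with
  | none => simp [gpoly, frv]
  | some i => by_cases h : x i <;> simp [gpoly, frv, h] <;> norm_num

lemma vars_gpoly {n : ℕ} (o : Option (Fin n)) {v : Fin n} (hv : v ∈ (gpoly o).vars) :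
    o = some v := by
  classical
  cases o with
  | none => simp [gpoly, vars_one] at hv
  | some i =>
    have h1 : (gpoly (some i) : MvPolynomial (Fin n) ℝ).vars ⊆
        (1 : MvPolynomial (Fin n) ℝ).vars ∪ ((2 : MvPolynomial (Fin n) ℝ) * X i).vars := by
      simpa [gpoly, sub_eq_add_neg, vars_neg] using
        vars_add_subset (1 : MvPolynomial (Fin n) ℝ) (-((2 : MvPolynomial (Fin n) ℝ) * X i))
    have h2 := h1 hv
    rw [vars_one] at h2
    simp only [Finset.empty_union] at h2
    have h3 := vars_mul (2 : MvPolynomial (Fin n) ℝ) (X i) h2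
    have h4 : ((2 : MvPolynomial (Fin n) ℝ)).vars = ∅ := by
      have : ((2 : MvPolynomial (Fin n) ℝ)) = C 2 := by simp [map_ofNat]
      rw [this, vars_C]
    rw [h4, vars_X] at h3
    simp only [Finset.empty_union, Finset.mem_singleton] at h3
    exact congrArg some h3.symm

lemma degreeOf_eq_zero_of_notMem_vars {n : ℕ} {p : MvPolynomial (Fin n) ℝ} {v : Fin n}
    (h : v ∉ p.vars) : p.degreeOf v = 0 := by
  rw [degreeOf_eq_sup]
  refine Nat.le_zero.mp (Finset.sup_le fun m hm => ?_)
  by_contra hc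
  exact h ((mem_vars v).mpr ⟨m, hm, Finsupp.mem_support_iff.mpr fun h0 => hc (by simp [h0])⟩)

lemma degreeOf_one' {n : ℕ} (v : Fin n) :
    (1 : MvPolynomial (Fin n) ℝ).degreeOf v = 0 := by
  rw [← MvPolynomial.C_1]; exact MvPolynomial.degreeOf_C 1 v

lemma degreeOf_gpoly_le {n : ℕ} (o : Option (Fin n)) (v : Fin n) :
    (gpoly o).degreeOf v ≤ 1 := by
  classical
  cases o with
  | none => simp [gpoly, degreeOf_one']
  | some i =>
    have h : (gpoly (some i) : MvPolynomial (Fin n) ℝ)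
        = C 1 + C (-2) * X i := by
      rw [map_one, show (C (-2) : MvPolynomial (Fin n) ℝ) = -2 by rw [map_neg, map_ofNat]]
      simp only [gpoly]; ring
    rw [h]
    refine le_trans (degreeOf_add_le _ _ _) ?_
    simp only [degreeOf_C, max_le_iff]
    constructor
    · simp
    · refine le_trans (degreeOf_mul_le _ _ _) ?_
      rw [degreeOf_C, degreeOf_X]
      split <;> simp

lemma degreeOf_gpoly_ne {n : ℕ} (o : Option (Fin n)) (v : Fin n) (h : o ≠ some v) :
    (gpoly o).degreeOf v = 0 :=
  degreeOf_eq_zero_of_notMem_vars (fun hv => h (vars_gpoly o hv))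

/-- The multilinear polynomial built from an SOS representation. -/
def Ppoly {n p : ℕ} (α : Fin p → Option (Fin n) → ℂ) : MvPolynomial (Fin n) ℝ :=
  ∑ l : Fin p, ∑ i : Option (Fin n), ∑ j : Option (Fin n),
    C (((starRingEnd ℂ) (α l i) * α l j).re) *
      (if i = j then 1 else gpoly i * gpoly j)

lemma Ppoly_multilinear {n p : ℕ} (α : Fin p → Option (Fin n) → ℂ) :
    IsMultilinear (Ppoly α) := by
  classical
  intro v
  refine le_trans (degreeOf_sum_le _ _ _) (Finset.sup_le fun l _ => ?_)
  refine le_trans (degreeOf_sum_le _ _ _) (Finset.sup_le fun i _ => ?_)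
  refine le_trans (degreeOf_sum_le _ _ _) (Finset.sup_le fun j _ => ?_)
  refine le_trans (degreeOf_mul_le _ _ _) ?_
  rw [degreeOf_C, zero_add]
  by_cases hij : i = j
  · simp [hij, degreeOf_one']
  · rw [if_neg hij]
    refine le_trans (degreeOf_mul_le _ _ _) ?_
    by_cases hi : i = some v
    · have hj : j ≠ some v := fun hj => hij (hi.trans hj.symm)
      rw [degreeOf_gpoly_ne j v hj]
      simpa using degreeOf_gpoly_le i v
    · rw [degreeOf_gpoly_ne i v hi, zero_add]
      exact degreeOf_gpoly_le j v

lemma Ppoly_eval {n p : ℕ} (α : Fin p → Option (Fin n) → ℂ) (x : Fin n → Bool) :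
    MvPolynomial.eval (fun i => if x i then (1 : ℝ) else 0) (Ppoly α)
      = ∑ l : Fin p,
          Complex.normSq (∑ i, (starRingEnd ℂ) (α l i) * fourierVec x i) := by
  classical
  unfold Ppoly
  rw [map_sum]
  refine Finset.sum_congr rfl fun l _ => ?_
  have hz : (∑ i, (starRingEnd ℂ) (α l i) * fourierVec x i)
      = ∑ i, (starRingEnd ℂ) (α l i) * ((frv x i : ℝ) : ℂ) := by
    refine Finset.sum_congr rfl fun i _ => by rw [fourierVec_eq_frv]
  rw [hz]
  set z : ℂ := ∑ i, (starRingEnd ℂ) (α l i) * ((frv x i : ℝ) : ℂ) with hzdef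
  have hns : Complex.normSq z = (z * (starRingEnd ℂ) z).re := by
    rw [Complex.mul_conj, Complex.ofReal_re]
  rw [hns, hzdef]
  have hL : MvPolynomial.eval (fun i => if x i then (1 : ℝ) else 0)
      (∑ i : Option (Fin n), ∑ j : Option (Fin n),
        C (((starRingEnd ℂ) (α l i) * α l j).re) *
          (if i = j then 1 else gpoly i * gpoly j))
      = ∑ i : Option (Fin n), ∑ j : Option (Fin n),
          ((starRingEnd ℂ) (α l i) * α l j).re * (frv x i * frv x j) := by
    rw [map_sum]
    refine Finset.sum_congr rfl fun i _ => ?_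
    rw [map_sum]
    refine Finset.sum_congr rfl fun j _ => ?_
    rw [map_mul, eval_C]
    congr 1
    by_cases h : i = j
    · subst h; rw [if_pos rfl, map_one, frv_sq]
    · rw [if_neg h, map_mul, eval_gpoly, eval_gpoly]
  rw [hL, map_sum, Finset.sum_mul_sum, Complex.re_sum]
  refine Finset.sum_congr rfl fun i _ => ?_
  rw [Complex.re_sum]
  refine Finset.sum_congr rfl fun j _ => ?_
  have hconj : (starRingEnd ℂ) ((starRingEnd ℂ) (α l j) * ((frv x j : ℝ) : ℂ))
      = α l j * ((frv x j : ℝ) : ℂ) := by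
    rw [map_mul]
    simp
  rw [hconj]
  have hmul : (starRingEnd ℂ) (α l i) * ((frv x i : ℝ) : ℂ) * (α l j * ((frv x j : ℝ) : ℂ))
      = ((starRingEnd ℂ) (α l i) * α l j) * (((frv x i * frv x j : ℝ)) : ℂ) := by
    push_cast; ring
  rw [hmul]
  simp [Complex.mul_re]

lemma Ppoly_vars {n p : ℕ} (α : Fin p → Option (Fin n) → ℂ) {v : Fin n}
    (hv : v ∈ (Ppoly α).vars) : ∃ l : Fin p, α l (some v) ≠ 0 := by
  classical
  unfold Ppoly at hv
  obtain ⟨l, -, hv⟩ := Finset.mem_biUnion.mp (vars_sum_subset _ _ hv)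
  obtain ⟨i, -, hv⟩ := Finset.mem_biUnion.mp (vars_sum_subset _ _ hv)
  obtain ⟨j, -, hv⟩ := Finset.mem_biUnion.mp (vars_sum_subset _ _ hv)
  by_cases hc : ((starRingEnd ℂ) (α l i) * α l j).re = 0
  · rw [hc, map_zero, zero_mul] at hv
    simp [vars_0] at hv
  · have hmul := vars_mul _ _ hv
    rw [vars_C] at hmul
    simp only [Finset.empty_union] at hmul
    have hij : i ≠ j ∨ i = j := (em (i = j)).symm
    by_cases h : i = j
    · rw [if_pos h, vars_one] at hmul; simp at hmul
    · rw [if_neg h] at hmul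
      have := vars_mul _ _ hmul
      rw [Finset.mem_union] at this
      have hαi : α l i ≠ 0 := fun h0 => hc (by simp [h0])
      have hαj : α l j ≠ 0 := fun h0 => hc (by simp [h0])
      rcases this with hcase | hcase
      · exact ⟨l, (vars_gpoly i hcase) ▸ hαi⟩
      · exact ⟨l, (vars_gpoly j hcase) ▸ hαj⟩

end AuxStmt9

theorem stmt_9 (n k p : ℕ) (D : Set (Fin n → Bool)) (f : (Fin n → Bool) → Bool)
    (hdep : DependsOnBits D f k)
    (α : Fin p → Option (Fin n) → ℂ)
    (hα : ∀ x ∈ D, ∑ l : Fin p,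
      Complex.normSq (∑ i, (starRingEnd ℂ) (α l i) * fourierVec x i)
      = if f x then 1 else 0) :
    k ≤ Set.ncard {i : Fin n | ∃ l : Fin p, α l (some i) ≠ 0} := by
  have hrep : Represents (Ppoly α) D f := by
    intro x hx
    rw [Ppoly_eval]
    exact hα x hx
  have hk : k ≤ (Ppoly α).vars.card :=
    hdep.2 ⟨Ppoly α, Ppoly_multilinear α, hrep, rfl⟩
  refine hk.trans ?_
  have hsub : (↑(Ppoly α).vars : Set (Fin n)) ⊆
      {i : Fin n | ∃ l : Fin p, α l (some i) ≠ 0} := fun v hv => Ppoly_vars α hv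
  calc (Ppoly α).vars.card = (↑(Ppoly α).vars : Set (Fin n)).ncard :=
        (Set.ncard_coe_finset _).symm
    _ ≤ _ := Set.ncard_le_ncard hsub (Set.toFinite _)
end

section
/- For n ≥ 2 and 1 ≤ j ≤ n+1, let X_1, …, X_j ∈ {0,1}^n be distinct points such that the vectors (1, X_1), …, (1, X_j) ∈ ℝ^{n+1} are linearly independent. Then the number of points Y ∈ {0,1}^n \ {X_1, …, X_j} such that (1, Y) lies in the real linear span of (1, X_1), …, (1, X_j) is at most 2^{j−1} − j. -/
open scoped BigOperators

open Module in
/-- Key combinatorial lemma: a set of Boolean vectors whose pairwise (real) differences lie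
in a subspace of rank at most `d` has at most `2 ^ d` elements. -/
theorem cube_in_subspace {ι : Type*} [Fintype ι]
    (d : ℕ) (V : Submodule ℝ (ι → ℝ)) (hV : Module.finrank ℝ V ≤ d)
    (s : Finset (ι → Bool))
    (hs : ∀ x ∈ s, ∀ y ∈ s,
      ((fun i => if x i then (1:ℝ) else 0) - fun i => if y i then (1:ℝ) else 0) ∈ V) :
    s.card ≤ 2 ^ d := by
  classical
  induction d generalizing V s with
  | zero =>
    have hV0 : V = ⊥ := Submodule.finrank_eq_zero.mp (Nat.le_zero.mp hV)
    have : s.card ≤ 1 := by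
      refine Finset.card_le_one.mpr (fun a ha b hb => ?_)
      have h := hs a ha b hb
      rw [hV0, Submodule.mem_bot, sub_eq_zero] at h
      funext i
      have := congrFun h i
      by_cases hai : a i <;> by_cases hbi : b i <;> simp_all
    simpa using this
  | succ d ih =>
    by_cases hcard : s.card ≤ 1
    · exact hcard.trans (Nat.one_le_two_pow)
    · obtain ⟨x₀, hx₀, x₁, hx₁, hne⟩ := Finset.one_lt_card.mp (not_le.mp hcard)
      obtain ⟨i, hi⟩ := Function.ne_iff.mp hne
      set ψ : (ι → ℝ) →ₗ[ℝ] ℝ := LinearMap.proj i with hψ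
      set V' : Submodule ℝ (ι → ℝ) := V ⊓ LinearMap.ker ψ with hV'
      have hdiff : ψ ((fun k => if x₀ k then (1:ℝ) else 0) -
          fun k => if x₁ k then (1:ℝ) else 0) ≠ 0 := by
        simp only [hψ, LinearMap.proj_apply, Pi.sub_apply]
        by_cases h0 : x₀ i <;> by_cases h1 : x₁ i <;> simp_all
      have hlt : V' < V := by
        refine lt_of_le_of_ne inf_le_left (fun hEq => ?_)
        have hmem : ((fun k => if x₀ k then (1:ℝ) else 0) -
            fun k => if x₁ k then (1:ℝ) else 0) ∈ V := hs x₀ hx₀ x₁ hx₁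
        rw [← hEq] at hmem
        exact hdiff hmem.2
      have hVd : Module.finrank ℝ V' ≤ d := by
        have := Submodule.finrank_lt_finrank_of_lt hlt
        omega
      have hsplit : (s.filter (fun x => x i = x₀ i)).card +
          (s.filter (fun x => ¬ x i = x₀ i)).card = s.card :=
        Finset.card_filter_add_card_filter_not _
      have key : ∀ t : Finset (ι → Bool), (∀ x ∈ t, x ∈ s) →
          (∀ x ∈ t, ∀ y ∈ t, x i = y i) → t.card ≤ 2 ^ d := by
        intro t hts heq
        refine ih V' hVd t (fun x hx y hy => ?_)
        refine ⟨hs x (hts x hx) y (hts y hy), LinearMap.mem_ker.mpr ?_⟩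
        have hxy := heq x hx y hy
        simp [hψ, hxy]
      have h0 : (s.filter (fun x => x i = x₀ i)).card ≤ 2 ^ d := by
        refine key _ (fun x hx => (Finset.mem_filter.mp hx).1) (fun x hx y hy => ?_)
        rw [(Finset.mem_filter.mp hx).2, (Finset.mem_filter.mp hy).2]
      have h1 : (s.filter (fun x => ¬ x i = x₀ i)).card ≤ 2 ^ d := by
        refine key _ (fun x hx => (Finset.mem_filter.mp hx).1) (fun x hx y hy => ?_)
        have hx' := (Finset.mem_filter.mp hx).2
        have hy' := (Finset.mem_filter.mp hy).2
        revert hx' hy'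
        cases x i <;> cases y i <;> cases x₀ i <;> simp
      calc s.card = _ + _ := hsplit.symm
        _ ≤ 2 ^ d + 2 ^ d := Nat.add_le_add h0 h1
        _ = 2 ^ (d + 1) := by ring

theorem stmt_10 (n j : ℕ) (hn : 2 ≤ n) (hj1 : 1 ≤ j) (hj2 : j ≤ n + 1)
    (X : Fin j → (Fin n → Bool)) (hinj : Function.Injective X)
    (hli : LinearIndependent ℝ (fun r : Fin j => polyVec (X r))) :
    Set.ncard {Y : Fin n → Bool | Y ∉ Set.range X ∧
      polyVec Y ∈ Submodule.span ℝ (Set.range (fun r : Fin j => polyVec (X r)))}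
      ≤ 2 ^ (j - 1) - j := by
  classical
  set V : Submodule ℝ (Option (Fin n) → ℝ) :=
    Submodule.span ℝ (Set.range (fun r : Fin j => polyVec (X r))) with hVdef
  set S : Set (Fin n → Bool) := {Y | polyVec Y ∈ V} with hSdef
  have hSfin : S.Finite := Set.toFinite S
  have hrank : Module.finrank ℝ V = j := by
    rw [hVdef, finrank_span_eq_card hli, Fintype.card_fin]
  -- the hyperplane subspace
  set ψ : (Option (Fin n) → ℝ) →ₗ[ℝ] ℝ := LinearMap.proj none with hψ
  set V' : Submodule ℝ (Option (Fin n) → ℝ) := V ⊓ LinearMap.ker ψ with hV'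
  have hXmem : ∀ r : Fin j, polyVec (X r) ∈ V := fun r =>
    Submodule.subset_span ⟨r, rfl⟩
  have hlt : V' < V := by
    refine lt_of_le_of_ne inf_le_left (fun hEq => ?_)
    have hmem : polyVec (X ⟨0, hj1⟩) ∈ V := hXmem _
    rw [← hEq] at hmem
    have : ψ (polyVec (X ⟨0, hj1⟩)) = 0 := hmem.2
    simp [hψ, polyVec] at this
  have hV'rank : Module.finrank ℝ V' ≤ j - 1 := by
    have := Submodule.finrank_lt_finrank_of_lt hlt
    omega
  -- embed into Boolean vectors over `Option (Fin n)`
  set e : (Fin n → Bool) → (Option (Fin n) → Bool) := fun Y o => o.elim true Y with he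
  have heinj : Function.Injective e := by
    intro a b h
    funext i
    exact congrFun h (some i)
  have hpoly : ∀ Y : Fin n → Bool,
      (fun o => if e Y o then (1:ℝ) else 0) = polyVec Y := by
    intro Y; funext o; cases o <;> rfl
  have hcard : hSfin.toFinset.card ≤ 2 ^ (j - 1) := by
    have := cube_in_subspace (j - 1) V' hV'rank (hSfin.toFinset.image e) ?_
    · rwa [Finset.card_image_of_injective _ heinj] at this
    · intro u hu v hv
      obtain ⟨x, hx, rfl⟩ := Finset.mem_image.mp hu
      obtain ⟨y, hy, rfl⟩ := Finset.mem_image.mp hv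
      rw [hpoly x, hpoly y]
      have hxS : polyVec x ∈ V := (hSfin.mem_toFinset.mp hx)
      have hyS : polyVec y ∈ V := (hSfin.mem_toFinset.mp hy)
      refine ⟨Submodule.sub_mem V hxS hyS, LinearMap.mem_ker.mpr ?_⟩
      simp [hψ, polyVec]
  have hSncard : S.ncard ≤ 2 ^ (j - 1) := by
    rwa [Set.ncard_eq_toFinset_card S hSfin]
  -- split S into the range of X and the rest
  set T : Set (Fin n → Bool) := {Y | Y ∉ Set.range X ∧ polyVec Y ∈ V} with hTdef
  have hSeq : S = T ∪ Set.range X := by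
    ext Y
    constructor
    · intro hY
      by_cases h : Y ∈ Set.range X
      · exact Or.inr h
      · exact Or.inl ⟨h, hY⟩
    · rintro (⟨_, hY⟩ | ⟨r, rfl⟩)
      · exact hY
      · exact hXmem r
  have hdisj : Disjoint T (Set.range X) :=
    Set.disjoint_left.mpr (fun Y hY => hY.1)
  have hrange : (Set.range X).ncard = j := by
    rw [← Set.image_univ, Set.ncard_image_of_injective _ hinj, Set.ncard_univ,
      Nat.card_eq_fintype_card, Fintype.card_fin]
  have hunion : S.ncard = T.ncard + (Set.range X).ncard := by
    rw [hSeq, Set.ncard_union_eq hdisj (Set.toFinite T) (Set.toFinite _)]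
  omega
end

section
/- For all n ≥ 3 and 2 ≤ k ≤ n, the number of pairs (D₀, D₁) of disjoint nonempty subsets of {0,1}^n such that, writing r_b for the dimension of the real linear span of {(1, x) : x ∈ D_b} ⊆ ℝ^{n+1} (b ∈ {0,1}), one has r₀ ≤ n, r₁ ≤ n, and r₀ + r₁ ≤ 2n + 2 − k, is at most n²·2^{2^{n−1}(1+2^{2−k}) + 2n²}. -/
open scoped BigOperators

section aux
variable {n : ℕ}

/-- rank of the poly vectors of a set -/
noncomputable def rkk {n : ℕ} (D : Set (Fin n → Bool)) : ℕ :=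
  Module.finrank ℝ (Submodule.span ℝ (polyVec '' D))

lemma polyVec_ne_zero (x : Fin n → Bool) : polyVec x ≠ 0 := by
  intro h
  have := congrFun h none
  simp [polyVec] at this

lemma rkk_pos {D : Set (Fin n → Bool)} (h : D.Nonempty) : 1 ≤ rkk D := by
  obtain ⟨x, hx⟩ := h
  have hmem : polyVec x ∈ Submodule.span ℝ (polyVec '' D) :=
    Submodule.subset_span ⟨x, hx, rfl⟩
  have : 0 < rkk D := by
    rw [rkk, Module.finrank_pos_iff_exists_ne_zero]
    exact ⟨⟨polyVec x, hmem⟩, by simpa [Submodule.mk_eq_zero] using polyVec_ne_zero x⟩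
  omega

lemma polyVec_not_mem_span {D : Set (Fin n → Bool)} {i : Fin n} {c : Bool}
    (hD : ∀ x ∈ D, x i = c) {y : Fin n → Bool} (hy : y i ≠ c) :
    polyVec y ∉ Submodule.span ℝ (polyVec '' D) := by
  cases c with
  | false =>
    set φ : (Option (Fin n) → ℝ) →ₗ[ℝ] ℝ := LinearMap.proj (some i) with hφ
    intro hmem
    have hker : Submodule.span ℝ (polyVec '' D) ≤ LinearMap.ker φ := by
      rw [Submodule.span_le]
      rintro _ ⟨x, hx, rfl⟩
      simp [φ, LinearMap.mem_ker, polyVec, hD x hx]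
    have := hker hmem
    have hyt : y i = true := by simpa using hy
    simp [φ, LinearMap.mem_ker, polyVec, hyt] at this
  | true =>
    set φ : (Option (Fin n) → ℝ) →ₗ[ℝ] ℝ :=
      (LinearMap.proj none : (Option (Fin n) → ℝ) →ₗ[ℝ] ℝ)
        - (LinearMap.proj (some i) : (Option (Fin n) → ℝ) →ₗ[ℝ] ℝ) with hφ
    intro hmem
    have hker : Submodule.span ℝ (polyVec '' D) ≤ LinearMap.ker φ := by
      rw [Submodule.span_le]
      rintro _ ⟨x, hx, rfl⟩
      simp [φ, LinearMap.mem_ker, polyVec, hD x hx]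
    have := hker hmem
    have hyf : y i = false := by simpa using hy
    simp [φ, LinearMap.mem_ker, polyVec, hyf] at this

lemma rkk_add_one_le {D₀ D : Set (Fin n → Bool)} (hsub : D₀ ⊆ D) {i : Fin n} {c : Bool}
    (h0 : ∀ x ∈ D₀, x i = c) {y : Fin n → Bool} (hyD : y ∈ D) (hy : y i ≠ c) :
    rkk D₀ + 1 ≤ rkk D := by
  have hle : Submodule.span ℝ (polyVec '' D₀) ≤ Submodule.span ℝ (polyVec '' D) :=
    Submodule.span_mono (Set.image_mono hsub)
  have hlt : Submodule.span ℝ (polyVec '' D₀) < Submodule.span ℝ (polyVec '' D) :=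
    lt_of_le_of_ne hle (by
      intro h
      exact polyVec_not_mem_span h0 hy (h ▸ Submodule.subset_span ⟨y, hyD, rfl⟩))
  exact Submodule.finrank_lt_finrank_of_lt hlt

lemma ncard_le_two_pow :
    ∀ N : ℕ, ∀ D : Set (Fin n → Bool), D.ncard ≤ N → D.ncard ≤ 2 ^ (rkk D - 1) := by
  intro N
  induction N with
  | zero =>
    intro D h
    have h0 : D.ncard = 0 := by omega
    simp [h0]
  | succ N ih =>
    intro D hN
    by_cases h1 : D.ncard ≤ 1
    · exact h1.trans Nat.one_le_two_pow
    push_neg at h1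
    obtain ⟨a, b, ha, hb, hab⟩ := (Set.one_lt_ncard_iff D.toFinite).1 h1
    obtain ⟨i, hi⟩ := Function.ne_iff.1 hab
    set D₀ : Set (Fin n → Bool) := {x ∈ D | x i = false} with hD₀
    set D₁ : Set (Fin n → Bool) := {x ∈ D | x i = true} with hD₁
    have hne₀ : D₀.Nonempty := by
      rcases Bool.eq_false_or_eq_true (a i) with h | h
      · refine ⟨b, hb, ?_⟩
        rw [h] at hi
        revert hi; cases b i <;> simp
      · exact ⟨a, ha, h⟩
    have hne₁ : D₁.Nonempty := by
      rcases Bool.eq_false_or_eq_true (a i) with h | h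
      · exact ⟨a, ha, h⟩
      · refine ⟨b, hb, ?_⟩
        rw [h] at hi
        revert hi; cases b i <;> simp
    have hunion : D = D₀ ∪ D₁ := by
      ext x
      by_cases hx : x i = true <;> simp [hD₀, hD₁, hx]
    have hdisj : Disjoint D₀ D₁ := by
      rw [Set.disjoint_left]
      rintro x ⟨-, hx0⟩ ⟨-, hx1⟩
      rw [hx0] at hx1; exact Bool.false_ne_true hx1
    have hcard : D.ncard = D₀.ncard + D₁.ncard := by
      rw [hunion]; exact Set.ncard_union_eq hdisj (Set.toFinite _) (Set.toFinite _)
    have hlt₀ : D₀.ncard < D.ncard := by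
      have : 0 < D₁.ncard := (Set.ncard_pos (Set.toFinite _)).2 hne₁
      omega
    have hlt₁ : D₁.ncard < D.ncard := by
      have : 0 < D₀.ncard := (Set.ncard_pos (Set.toFinite _)).2 hne₀
      omega
    obtain ⟨y₁, hy₁⟩ := hne₁
    obtain ⟨y₀, hy₀⟩ := hne₀
    have hr₀ : rkk D₀ + 1 ≤ rkk D :=
      rkk_add_one_le (fun x hx => hx.1) (fun x hx => hx.2) hy₁.1 (by simp [hy₁.2])
    have hr₁ : rkk D₁ + 1 ≤ rkk D :=
      rkk_add_one_le (fun x hx => hx.1) (fun x hx => hx.2) hy₀.1 (by simp [hy₀.2])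
    have hb₀ : D₀.ncard ≤ 2 ^ (rkk D₀ - 1) := ih D₀ (by omega)
    have hb₁ : D₁.ncard ≤ 2 ^ (rkk D₁ - 1) := ih D₁ (by omega)
    have hpos₀ : 1 ≤ rkk D₀ := rkk_pos ⟨y₀, hy₀⟩
    have hpos₁ : 1 ≤ rkk D₁ := rkk_pos ⟨y₁, hy₁⟩
    have h2 : 2 ≤ rkk D := by omega
    calc D.ncard = D₀.ncard + D₁.ncard := hcard
      _ ≤ 2 ^ (rkk D₀ - 1) + 2 ^ (rkk D₁ - 1) := add_le_add hb₀ hb₁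
      _ ≤ 2 ^ (rkk D - 2) + 2 ^ (rkk D - 2) :=
          add_le_add (Nat.pow_le_pow_right (by norm_num) (by omega))
            (Nat.pow_le_pow_right (by norm_num) (by omega))
      _ = 2 ^ (rkk D - 1) := by
          rw [← two_mul, ← pow_succ']
          congr 1
          omega

end aux

section aux2
variable {n : ℕ}

lemma exists_tuple {D : Set (Fin n → Bool)} (hne : D.Nonempty) (hrk : rkk D ≤ n) :
    ∃ b : Fin n → (Fin n → Bool),
      Submodule.span ℝ (polyVec '' D)
        = Submodule.span ℝ (Set.range (fun j => polyVec (b j))) := by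
  classical
  obtain ⟨t, hts, hspan, hind⟩ := exists_linearIndependent ℝ (polyVec '' D)
  have htfin : t.Finite := (D.toFinite.image polyVec).subset hts
  haveI : Fintype t := htfin.fintype
  have hcard : t.toFinset.card = rkk D := by
    rw [rkk, ← hspan, finrank_span_set_eq_card hind]
  have hle : t.toFinset.card ≤ n := hcard ▸ hrk
  -- for each element of t choose a preimage in D
  have hpre : ∀ v ∈ t, ∃ x ∈ D, polyVec x = v := by
    intro v hv
    obtain ⟨x, hx, hxe⟩ := hts hv
    exact ⟨x, hx, hxe⟩
  choose pick hpickD hpickE using hpre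
  set e : Fin t.toFinset.card ≃ {v // v ∈ t.toFinset} := t.toFinset.equivFin.symm with he
  set b : Fin n → (Fin n → Bool) := fun j =>
    if h : (j : ℕ) < t.toFinset.card then
      pick (e ⟨j, h⟩).1 (Set.mem_toFinset.mp (e ⟨j, h⟩).2)
    else hne.choose with hbdef
  refine ⟨b, le_antisymm ?_ ?_⟩
  · rw [← hspan]
    apply Submodule.span_le.2
    intro v hv
    apply Submodule.subset_span
    have hvt : v ∈ t.toFinset := by simpa using hv
    set j0 : Fin t.toFinset.card := e.symm ⟨v, hvt⟩ with hj0
    have hlt : ((Fin.castLE hle j0 : Fin n) : ℕ) < t.toFinset.card := j0.2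
    have hfin : (⟨((Fin.castLE hle j0 : Fin n) : ℕ), hlt⟩ : Fin t.toFinset.card) = j0 :=
      Fin.ext rfl
    refine ⟨Fin.castLE hle j0, ?_⟩
    show polyVec (b (Fin.castLE hle j0)) = v
    rw [hbdef]
    simp only []
    rw [dif_pos hlt, hpickE]
    rw [hfin, hj0, Equiv.apply_symm_apply]
  · apply Submodule.span_le.2
    rintro _ ⟨j, rfl⟩
    apply Submodule.subset_span
    by_cases h : (j : ℕ) < t.toFinset.card
    · refine ⟨pick (e ⟨j, h⟩).1 (Set.mem_toFinset.mp (e ⟨j, h⟩).2), hpickD _ _, ?_⟩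
      show _ = polyVec (b j)
      rw [hbdef]
      simp only []
      rw [dif_pos h]
    · refine ⟨hne.choose, hne.choose_spec, ?_⟩
      show _ = polyVec (b j)
      rw [hbdef]
      simp only []
      rw [dif_neg h]

/-- generic counting lemma -/
lemma ncard_le_card_mul {β γ : Type*} [Finite β] (s : Set β) (f : β → γ) (t : Finset γ)
    (m : ℕ) (h1 : ∀ a ∈ s, f a ∈ t) (h2 : ∀ c, {a ∈ s | f a = c}.ncard ≤ m) :
    s.ncard ≤ t.card * m := by
  classical
  have hfin : s.Finite := s.toFinite
  rw [Set.ncard_eq_toFinset_card s hfin]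
  have hsub : hfin.toFinset ⊆
      t.biUnion (fun c => ({a ∈ s | f a = c}).toFinite.toFinset) := by
    intro a ha
    rw [Set.Finite.mem_toFinset] at ha
    rw [Finset.mem_biUnion]
    exact ⟨f a, h1 a ha, by rw [Set.Finite.mem_toFinset]; exact ⟨ha, rfl⟩⟩
  refine (Finset.card_le_card hsub).trans (Finset.card_biUnion_le.trans ?_)
  calc ∑ c ∈ t, ({a ∈ s | f a = c}).toFinite.toFinset.card
      ≤ ∑ _c ∈ t, m := Finset.sum_le_sum (fun c _ => by
        rw [← Set.ncard_eq_toFinset_card]; exact h2 c)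
    _ = t.card * m := by rw [Finset.sum_const, smul_eq_mul]

/-- counting pairs of subsets of given sets -/
lemma ncard_pairs_le {β : Type*} [Finite β] (E₀ E₁ : Set β) (s : Set (Set β × Set β))
    (hs : ∀ p ∈ s, p.1 ⊆ E₀ ∧ p.2 ⊆ E₁) :
    s.ncard ≤ 2 ^ E₀.ncard * 2 ^ E₁.ncard := by
  classical
  have := Fintype.ofFinite β
  have key := Set.ncard_le_ncard_of_injOn
    (fun p : Set β × Set β => (p.1.toFinset, p.2.toFinset))
    (t := ↑((E₀.toFinset.powerset) ×ˢ (E₁.toFinset.powerset)))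
    (fun p hp => by
      obtain ⟨h0, h1⟩ := hs p hp
      simp only [Finset.coe_product, Set.mem_prod, Finset.mem_coe, Finset.mem_powerset]
      constructor
      · intro x hx; rw [Set.mem_toFinset] at hx ⊢; exact h0 hx
      · intro x hx; rw [Set.mem_toFinset] at hx ⊢; exact h1 hx)
    (fun p hp q hq hpq => by
      obtain ⟨h1, h2⟩ := Prod.mk.injEq .. ▸ hpq
      have e1 : p.1 = q.1 := by rw [← Set.coe_toFinset p.1, ← Set.coe_toFinset q.1, h1]
      have e2 : p.2 = q.2 := by rw [← Set.coe_toFinset p.2, ← Set.coe_toFinset q.2, h2]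
      exact Prod.ext e1 e2)
    (Set.toFinite _)
  rw [Set.ncard_coe_finset, Finset.card_product, Finset.card_powerset,
    Finset.card_powerset] at key
  refine key.trans ?_
  rw [Set.ncard_eq_toFinset_card', Set.ncard_eq_toFinset_card']

/-- convexity bound -/
lemma two_pow_convex_aux (a b M s : ℕ) (ha : a ≤ M) (hb : b ≤ M) (hab : a + b ≤ s)
    (hM : M ≤ s) (h : a ≤ b) : 2 ^ a + 2 ^ b ≤ 2 ^ M + 2 ^ (s - M) := by
  by_cases hc : a ≤ s - M
  · exact add_le_add (Nat.pow_le_pow_right (by norm_num) hc)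
      (Nat.pow_le_pow_right (by norm_num) hb) |>.trans_eq (by ring)
  · push_neg at hc
    have hb1 : b + 1 ≤ M := by omega
    calc 2 ^ a + 2 ^ b ≤ 2 ^ b + 2 ^ b :=
          Nat.add_le_add_right (Nat.pow_le_pow_right (by norm_num) h) _
      _ = 2 ^ (b + 1) := by rw [pow_succ]; ring
      _ ≤ 2 ^ M := Nat.pow_le_pow_right (by norm_num) hb1
      _ ≤ 2 ^ M + 2 ^ (s - M) := Nat.le_add_right _ _

lemma two_pow_convex (a b M s : ℕ) (ha : a ≤ M) (hb : b ≤ M) (hab : a + b ≤ s)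
    (hM : M ≤ s) : 2 ^ a + 2 ^ b ≤ 2 ^ M + 2 ^ (s - M) := by
  rcases le_total a b with h | h
  · exact two_pow_convex_aux a b M s ha hb hab hM h
  · rw [add_comm (2 ^ a)]
    exact two_pow_convex_aux b a M s hb ha (by omega) hM h

end aux2

section main
variable {n : ℕ}

open scoped Classical in
noncomputable def chooseTuple {n : ℕ} (D : Set (Fin n → Bool)) : Fin n → (Fin n → Bool) :=
  if h : ∃ b : Fin n → (Fin n → Bool),
      Submodule.span ℝ (polyVec '' D)
        = Submodule.span ℝ (Set.range (fun j => polyVec (b j))) then h.choose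
  else fun _ _ => false

lemma chooseTuple_spec {D : Set (Fin n → Bool)}
    (h : ∃ b : Fin n → (Fin n → Bool), Submodule.span ℝ (polyVec '' D)
        = Submodule.span ℝ (Set.range (fun j => polyVec (b j)))) :
    Submodule.span ℝ (polyVec '' D)
      = Submodule.span ℝ (Set.range (fun j => polyVec (chooseTuple D j))) := by
  unfold chooseTuple
  rw [dif_pos h]
  exact h.choose_spec

lemma main_count (n k : ℕ) (hn : 3 ≤ n) (hk2 : 2 ≤ k) (hkn : k ≤ n) :
    Set.ncard {Dp : Set (Fin n → Bool) × Set (Fin n → Bool) |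
        Dp.1.Nonempty ∧ Dp.2.Nonempty ∧ Disjoint Dp.1 Dp.2 ∧
        Module.finrank ℝ (Submodule.span ℝ (polyVec '' Dp.1)) ≤ n ∧
        Module.finrank ℝ (Submodule.span ℝ (polyVec '' Dp.2)) ≤ n ∧
        (Module.finrank ℝ (Submodule.span ℝ (polyVec '' Dp.1)) : ℤ)
          + (Module.finrank ℝ (Submodule.span ℝ (polyVec '' Dp.2)) : ℤ)
          ≤ 2 * n + 2 - k}
      ≤ 2 ^ (2 * n ^ 2) * (2 ^ (2 ^ (n - 1)) * 2 ^ (2 ^ (n + 1 - k))) := by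
  classical
  set S : Set (Set (Fin n → Bool) × Set (Fin n → Bool)) :=
    {Dp | Dp.1.Nonempty ∧ Dp.2.Nonempty ∧ Disjoint Dp.1 Dp.2 ∧
        rkk Dp.1 ≤ n ∧ rkk Dp.2 ≤ n ∧
        (rkk Dp.1 : ℤ) + (rkk Dp.2 : ℤ) ≤ 2 * n + 2 - k} with hSdef
  show S.ncard ≤ _
  set F : Set (Fin n → Bool) × Set (Fin n → Bool)
      → (Fin n → Fin n → Bool) × (Fin n → Fin n → Bool) :=
    fun p => (chooseTuple p.1, chooseTuple p.2) with hF
  set m : ℕ := 2 ^ (2 ^ (n - 1)) * 2 ^ (2 ^ (n + 1 - k)) with hm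
  have h2 : ∀ c, {p ∈ S | F p = c}.ncard ≤ m := by
    intro c
    rcases Set.eq_empty_or_nonempty {p ∈ S | F p = c} with hemp | ⟨⟨D₀, D₁⟩, hw, hwF⟩
    · rw [hemp, Set.ncard_empty]; exact Nat.zero_le _
    obtain ⟨hne₀', hne₁', -, hle₀', hle₁', hsum'⟩ := hw
    have hne₀ : D₀.Nonempty := hne₀'
    have hne₁ : D₁.Nonempty := hne₁'
    have hle₀ : rkk D₀ ≤ n := hle₀'
    have hle₁ : rkk D₁ ≤ n := hle₁'
    have hsum : (rkk D₀ : ℤ) + (rkk D₁ : ℤ) ≤ 2 * n + 2 - k := hsum'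
    have hc₀ : chooseTuple D₀ = c.1 := congrArg Prod.fst hwF
    have hc₁ : chooseTuple D₁ = c.2 := congrArg Prod.snd hwF
    have hr₀ : 1 ≤ rkk D₀ := rkk_pos hne₀
    have hr₁ : 1 ≤ rkk D₁ := rkk_pos hne₁
    set E₀ : Set (Fin n → Bool) :=
      {x | polyVec x ∈ Submodule.span ℝ (Set.range (fun j => polyVec (c.1 j)))} with hE₀
    set E₁ : Set (Fin n → Bool) :=
      {x | polyVec x ∈ Submodule.span ℝ (Set.range (fun j => polyVec (c.2 j)))} with hE₁
    -- members of the fiber are contained in E₀ × E₁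
    have hsub : ∀ p ∈ {p ∈ S | F p = c}, p.1 ⊆ E₀ ∧ p.2 ⊆ E₁ := by
      rintro ⟨A₀, A₁⟩ ⟨⟨hA0ne', hA1ne', -, hA0le', hA1le', -⟩, hAF⟩
      have hA0ne : A₀.Nonempty := hA0ne'
      have hA1ne : A₁.Nonempty := hA1ne'
      have hA0le : rkk A₀ ≤ n := hA0le'
      have hA1le : rkk A₁ ≤ n := hA1le'
      have hd₀ : chooseTuple A₀ = c.1 := congrArg Prod.fst hAF
      have hd₁ : chooseTuple A₁ = c.2 := congrArg Prod.snd hAF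
      constructor
      · intro x hx
        have hsp := chooseTuple_spec (exists_tuple hA0ne hA0le)
        rw [hd₀] at hsp
        show polyVec x ∈ Submodule.span ℝ (Set.range fun j => polyVec (c.1 j))
        rw [← hsp]
        exact Submodule.subset_span ⟨x, hx, rfl⟩
      · intro x hx
        have hsp := chooseTuple_spec (exists_tuple hA1ne hA1le)
        rw [hd₁] at hsp
        show polyVec x ∈ Submodule.span ℝ (Set.range fun j => polyVec (c.2 j))
        rw [← hsp]
        exact Submodule.subset_span ⟨x, hx, rfl⟩
    -- ranks of E₀, E₁
    have hrkE₀ : rkk E₀ ≤ rkk D₀ := by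
      have hspan := chooseTuple_spec (exists_tuple hne₀ hle₀)
      rw [hc₀] at hspan
      rw [rkk, rkk, hspan]
      exact Submodule.finrank_mono (Submodule.span_le.2 (by
        rintro _ ⟨x, hx, rfl⟩; exact hx))
    have hrkE₁ : rkk E₁ ≤ rkk D₁ := by
      have hspan := chooseTuple_spec (exists_tuple hne₁ hle₁)
      rw [hc₁] at hspan
      rw [rkk, rkk, hspan]
      exact Submodule.finrank_mono (Submodule.span_le.2 (by
        rintro _ ⟨x, hx, rfl⟩; exact hx))
    have hcardE₀ : E₀.ncard ≤ 2 ^ (rkk D₀ - 1) :=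
      (ncard_le_two_pow E₀.ncard E₀ le_rfl).trans
        (Nat.pow_le_pow_right (by norm_num) (by omega))
    have hcardE₁ : E₁.ncard ≤ 2 ^ (rkk D₁ - 1) :=
      (ncard_le_two_pow E₁.ncard E₁ le_rfl).trans
        (Nat.pow_le_pow_right (by norm_num) (by omega))
    refine (ncard_pairs_le E₀ E₁ _ hsub).trans ?_
    have hsumN : rkk D₀ + rkk D₁ + k ≤ 2 * n + 2 := by omega
    have hconv : 2 ^ (rkk D₀ - 1) + 2 ^ (rkk D₁ - 1) ≤ 2 ^ (n - 1) + 2 ^ (n + 1 - k) := by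
      have := two_pow_convex (rkk D₀ - 1) (rkk D₁ - 1) (n - 1) (2 * n - k)
        (by omega) (by omega) (by omega) (by omega)
      have he : 2 * n - k - (n - 1) = n + 1 - k := by omega
      rwa [he] at this
    calc 2 ^ E₀.ncard * 2 ^ E₁.ncard
        ≤ 2 ^ (2 ^ (rkk D₀ - 1)) * 2 ^ (2 ^ (rkk D₁ - 1)) :=
          Nat.mul_le_mul (Nat.pow_le_pow_right (by norm_num) hcardE₀)
            (Nat.pow_le_pow_right (by norm_num) hcardE₁)
      _ = 2 ^ (2 ^ (rkk D₀ - 1) + 2 ^ (rkk D₁ - 1)) := (pow_add 2 _ _).symm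
      _ ≤ 2 ^ (2 ^ (n - 1) + 2 ^ (n + 1 - k)) :=
          Nat.pow_le_pow_right (by norm_num) hconv
      _ = m := by rw [hm, pow_add]
  have key := ncard_le_card_mul S F Finset.univ m (fun a _ => Finset.mem_univ _) h2
  refine key.trans ?_
  rw [Finset.card_univ]
  have hcardfun : Fintype.card ((Fin n → Fin n → Bool) × (Fin n → Fin n → Bool))
      = 2 ^ (2 * n ^ 2) := by
    simp only [Fintype.card_prod, Fintype.card_fun, Fintype.card_bool, Fintype.card_fin]
    rw [← pow_mul, ← pow_add]
    congr 1
    ring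
  rw [hcardfun, hm]

end main


theorem stmt_12 (n k : ℕ) (hn : 3 ≤ n) (hk2 : 2 ≤ k) (hkn : k ≤ n) :
    (Set.ncard {Dp : Set (Fin n → Bool) × Set (Fin n → Bool) |
        Dp.1.Nonempty ∧ Dp.2.Nonempty ∧ Disjoint Dp.1 Dp.2 ∧
        Module.finrank ℝ (Submodule.span ℝ (polyVec '' Dp.1)) ≤ n ∧
        Module.finrank ℝ (Submodule.span ℝ (polyVec '' Dp.2)) ≤ n ∧
        (Module.finrank ℝ (Submodule.span ℝ (polyVec '' Dp.1)) : ℤ)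
          + (Module.finrank ℝ (Submodule.span ℝ (polyVec '' Dp.2)) : ℤ)
          ≤ 2 * n + 2 - k} : ℝ)
      ≤ (n : ℝ) ^ 2 *
        2 ^ ((2 : ℝ) ^ ((n : ℝ) - 1) * (1 + (2 : ℝ) ^ ((2 : ℝ) - (k : ℝ)))
              + 2 * (n : ℝ) ^ 2) := by
  have hmc := main_count n k hn hk2 hkn
  set a : ℕ := 2 ^ (n - 1) with ha
  set b : ℕ := 2 ^ (n + 1 - k) with hb
  set c : ℕ := 2 * n ^ 2 with hc
  have h1 : (2:ℝ) ^ ((n:ℝ) - 1) = (a : ℝ) := by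
    rw [show (n:ℝ) - 1 = ((n - 1 : ℕ) : ℝ) by rw [Nat.cast_sub (by omega)]; norm_num]
    rw [Real.rpow_natCast]
    rw [ha]
    norm_cast
  have h2 : (2:ℝ) ^ ((n:ℝ) - 1) * (2:ℝ) ^ ((2:ℝ) - (k:ℝ)) = (b : ℝ) := by
    rw [← Real.rpow_add (by norm_num : (0:ℝ) < 2)]
    rw [show (n:ℝ) - 1 + ((2:ℝ) - (k:ℝ)) = ((n + 1 - k : ℕ) : ℝ) by
      rw [Nat.cast_sub (by omega)]; push_cast; ring]
    rw [Real.rpow_natCast]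
    rw [hb]
    norm_cast
  have hE : (2:ℝ) ^ ((n:ℝ) - 1) * (1 + (2:ℝ) ^ ((2:ℝ) - (k:ℝ))) + 2 * (n:ℝ) ^ 2
      = ((a + b + c : ℕ) : ℝ) := by
    rw [mul_add, mul_one, h2, h1]
    push_cast [hc]
    ring
  have hpow : (2:ℝ) ^ ((2:ℝ) ^ ((n:ℝ) - 1) * (1 + (2:ℝ) ^ ((2:ℝ) - (k:ℝ)))
        + 2 * (n:ℝ) ^ 2) = ((2 ^ (a + b + c) : ℕ) : ℝ) := by
    rw [hE, Real.rpow_natCast]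
    norm_cast
  have hnat : 2 ^ c * (2 ^ a * 2 ^ b) = 2 ^ (a + b + c) := by ring
  calc (Set.ncard _ : ℝ) ≤ ((2 ^ c * (2 ^ a * 2 ^ b) : ℕ) : ℝ) := Nat.cast_le.mpr hmc
    _ = ((2 ^ (a + b + c) : ℕ) : ℝ) := by rw [hnat]
    _ ≤ (n:ℝ) ^ 2 * ((2 ^ (a + b + c) : ℕ) : ℝ) := by
        refine le_mul_of_one_le_left (by positivity) ?_
        have h3 : (3:ℝ) ≤ (n:ℝ) := by exact_mod_cast hn
        nlinarith
    _ = _ := by rw [hpow]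
end
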